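/- arXiv:2604.18544 — 5 statements merged into one kernel-verified Lean document; each statement's English description precedes it below -/
import Mathlib

section
/- Let p > 1 be a real number with p ≠ 2, and let a, b be real numbers. If p > 2 then |a+b|^p + |a-b|^p ≥ 2(|a|^p + |b|^p), and if 1 < p < 2 then |a+b|^p + |a-b|^p ≤ 2(|a|^p + |b|^p). -/
private lemma sq_rpow_half (x : ℝ) (hx : 0 ≤ x) (p : ℝ) : (x ^ 2) ^ (p / 2) = x ^ p := by
  rw [← Real.rpow_natCast x 2, ← Real.rpow_mul hx]
  congr 1
  push_cast
  ring

private lemma superadd (x y r : ℝ) (hx : 0 ≤ x) (hy : 0 ≤ y) (hr : 1 ≤ r) :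
    x ^ r + y ^ r ≤ (x + y) ^ r := by
  have := NNReal.add_rpow_le_rpow_add ⟨x, hx⟩ ⟨y, hy⟩ hr
  exact_mod_cast this

private lemma subadd (x y r : ℝ) (hx : 0 ≤ x) (hy : 0 ≤ y) (hr0 : 0 ≤ r) (hr1 : r ≤ 1) :
    (x + y) ^ r ≤ x ^ r + y ^ r := by
  have := NNReal.rpow_add_le_add_rpow ⟨x, hx⟩ ⟨y, hy⟩ hr0 hr1
  exact_mod_cast this

/-- Clarkson-type scalar inequalities: for real `p > 1`, `p ≠ 2`,
`|a+b|^p + |a-b|^p ≥ 2(|a|^p + |b|^p)` when `p > 2`, and the reverse when `1 < p < 2`. -/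
theorem clarkson_scalar (p a b : ℝ) (hp1 : 1 < p) (hp2 : p ≠ 2) :
    (2 < p → 2 * (|a| ^ p + |b| ^ p) ≤ |a + b| ^ p + |a - b| ^ p) ∧
    (p < 2 → |a + b| ^ p + |a - b| ^ p ≤ 2 * (|a| ^ p + |b| ^ p)) := by
  set S := |a + b| with hS
  set T := |a - b| with hT
  set A := |a| with hA
  set B := |b| with hB
  have hSnn : 0 ≤ S := abs_nonneg _
  have hTnn : 0 ≤ T := abs_nonneg _
  have hAnn : 0 ≤ A := abs_nonneg _
  have hBnn : 0 ≤ B := abs_nonneg _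
  have hpar : S ^ 2 + T ^ 2 = 2 * (A ^ 2 + B ^ 2) := by
    rw [hS, hT, hA, hB, sq_abs, sq_abs, sq_abs, sq_abs]; ring
  have hSp : (S ^ 2) ^ (p / 2) = S ^ p := sq_rpow_half S hSnn p
  have hTp : (T ^ 2) ^ (p / 2) = T ^ p := sq_rpow_half T hTnn p
  have hAp : (A ^ 2) ^ (p / 2) = A ^ p := sq_rpow_half A hAnn p
  have hBp : (B ^ 2) ^ (p / 2) = B ^ p := sq_rpow_half B hBnn p
  have hu : (S ^ 2 : ℝ) ∈ Set.Ici (0 : ℝ) := Set.mem_Ici.mpr (by positivity)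
  have hv : (T ^ 2 : ℝ) ∈ Set.Ici (0 : ℝ) := Set.mem_Ici.mpr (by positivity)
  constructor
  · intro hp
    have hr : (1 : ℝ) ≤ p / 2 := by linarith
    -- convexity: ((S²+T²)/2)^(p/2) ≤ (S^p + T^p)/2
    have hconv := (convexOn_rpow hr).2 hu hv (by norm_num : (0:ℝ) ≤ 1/2)
      (by norm_num : (0:ℝ) ≤ 1/2) (by norm_num)
    simp only [smul_eq_mul] at hconv
    have hmid : (1/2) * (S ^ 2) + (1/2) * (T ^ 2) = A ^ 2 + B ^ 2 := by
      rw [← mul_add, hpar]; ring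
    rw [hmid, hSp, hTp] at hconv
    -- superadditivity: A^p + B^p ≤ (A²+B²)^(p/2)
    have hsup := superadd (A ^ 2) (B ^ 2) (p / 2) (by positivity) (by positivity) hr
    rw [hAp, hBp] at hsup
    linarith
  · intro hp
    have hr0 : (0 : ℝ) ≤ p / 2 := by linarith
    have hr1 : p / 2 ≤ 1 := by linarith
    -- concavity: (S^p + T^p)/2 ≤ ((S²+T²)/2)^(p/2)
    have hconc := (Real.concaveOn_rpow hr0 hr1).2 hu hv (by norm_num : (0:ℝ) ≤ 1/2)
      (by norm_num : (0:ℝ) ≤ 1/2) (by norm_num)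
    simp only [smul_eq_mul] at hconc
    have hmid : (1/2) * (S ^ 2) + (1/2) * (T ^ 2) = A ^ 2 + B ^ 2 := by
      rw [← mul_add, hpar]; ring
    rw [hmid, hSp, hTp] at hconc
    -- subadditivity: (A²+B²)^(p/2) ≤ A^p + B^p
    have hsub := subadd (A ^ 2) (B ^ 2) (p / 2) (by positivity) (by positivity) hr0 hr1
    rw [hAp, hBp] at hsub
    linarith
end

section
/- Fix an integer p ≥ 2. For every interval I ⊆ ℝ/ℤ, every sign σ ∈ {-1, 1}, and every real R ≥ 1, the Lebesgue measure of the set {t ∈ [-R/2, R/2] : σ·t^p mod 1 ∈ I} equals |I|·R + O_p(1), where the implied constant depends only on p (uniformly in I, σ, and R). -/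
open MeasureTheory


private lemma hq0 (p : ℕ) (hp : 2 ≤ p) : (0:ℝ) < (p:ℝ)⁻¹ := by
  have : (0:ℝ) < p := by exact_mod_cast Nat.lt_of_lt_of_le Nat.zero_lt_two hp
  positivity

private lemma hq1 (p : ℕ) (hp : 2 ≤ p) : ((p:ℝ))⁻¹ < 1 := by
  have : (1:ℝ) < p := by exact_mod_cast Nat.lt_of_lt_of_le Nat.one_lt_two hp
  rw [inv_lt_one_iff₀]; right; exact this

private lemma le_g_iff (p : ℕ) (hp : 2 ≤ p) {t y : ℝ} (ht : 0 ≤ t) (hy : 0 ≤ y) :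
    t ≤ y ^ ((p:ℝ)⁻¹) ↔ t ^ p ≤ y := by
  have p0 : p ≠ 0 := by omega
  constructor
  · intro h
    calc t ^ p ≤ (y ^ ((p:ℝ)⁻¹)) ^ p := pow_le_pow_left₀ ht h p
    _ = y := Real.rpow_inv_natCast_pow hy p0
  · intro h
    calc t = (t ^ p) ^ ((p:ℝ)⁻¹) := (Real.pow_rpow_inv_natCast ht p0).symm
    _ ≤ y ^ ((p:ℝ)⁻¹) := Real.rpow_le_rpow (by positivity) h (by positivity)

private lemma g_le_iff (p : ℕ) (hp : 2 ≤ p) {t y : ℝ} (ht : 0 ≤ t) (hy : 0 ≤ y) :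
    y ^ ((p:ℝ)⁻¹) ≤ t ↔ y ≤ t ^ p := by
  have p0 : p ≠ 0 := by omega
  constructor
  · intro h
    calc y = (y ^ ((p:ℝ)⁻¹)) ^ p := (Real.rpow_inv_natCast_pow hy p0).symm
    _ ≤ t ^ p := pow_le_pow_left₀ (by positivity) h p
  · intro h
    calc y ^ ((p:ℝ)⁻¹) ≤ (t ^ p) ^ ((p:ℝ)⁻¹) := Real.rpow_le_rpow hy h (by positivity)
    _ = t := Real.pow_rpow_inv_natCast ht p0

private lemma g_lt_iff (p : ℕ) (hp : 2 ≤ p) {t y : ℝ} (ht : 0 ≤ t) (hy : 0 ≤ y) :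
    y ^ ((p:ℝ)⁻¹) < t ↔ y < t ^ p := by
  rw [← not_le, ← not_le]; exact not_congr (le_g_iff p hp ht hy)

private lemma lt_g_iff (p : ℕ) (hp : 2 ≤ p) {t y : ℝ} (ht : 0 ≤ t) (hy : 0 ≤ y) :
    t < y ^ ((p:ℝ)⁻¹) ↔ t ^ p < y := by
  rw [← not_le, ← not_le]; exact not_congr (g_le_iff p hp ht hy)

private lemma g_add_le (p : ℕ) (hp : 2 ≤ p) {x y : ℝ} (hx : 0 ≤ x) (hy : 0 ≤ y) :
    (x + y) ^ ((p:ℝ)⁻¹) ≤ x ^ ((p:ℝ)⁻¹) + y ^ ((p:ℝ)⁻¹) := by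
  have h := NNReal.rpow_add_le_add_rpow (⟨x,hx⟩ : NNReal) (⟨y,hy⟩ : NNReal)
    (le_of_lt (hq0 p hp)) (le_of_lt (hq1 p hp))
  have h2 := NNReal.coe_le_coe.mpr h
  push_cast at h2
  convert h2 using 2 <;> rfl

private lemma g_two_le (p : ℕ) (hp : 2 ≤ p) : (2:ℝ) ^ ((p:ℝ)⁻¹) ≤ 2 := by
  calc (2:ℝ) ^ ((p:ℝ)⁻¹) ≤ (2:ℝ) ^ (1:ℝ) :=
        Real.rpow_le_rpow_of_exponent_le (by norm_num) (le_of_lt (hq1 p hp))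
  _ = 2 := Real.rpow_one 2

private lemma slope_ineq (p : ℕ) (hp : 2 ≤ p) {a b x y : ℝ} (ha : 0 ≤ a) (hab : a < b)
    (hbx : b ≤ x) (hxy : x < y) :
    (y ^ ((p:ℝ)⁻¹) - x ^ ((p:ℝ)⁻¹)) * (b - a) ≤ (b ^ ((p:ℝ)⁻¹) - a ^ ((p:ℝ)⁻¹)) * (y - x) := by
  set f : ℝ → ℝ := fun t => t ^ ((p:ℝ)⁻¹) with hf
  have hcc : ConcaveOn ℝ (Set.Ici 0) f :=
    (Real.strictConcaveOn_rpow (hq0 p hp) (hq1 p hp)).concaveOn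
  have key : (f y - f x) / (y - x) ≤ (f b - f a) / (b - a) := by
    rcases eq_or_lt_of_le hbx with h | h
    · subst h
      exact hcc.slope_anti_adjacent ha (by simp only [Set.mem_Ici]; linarith) hab hxy
    · calc (f y - f x) / (y - x) ≤ (f x - f b) / (x - b) :=
            hcc.slope_anti_adjacent (by simp only [Set.mem_Ici]; linarith)
              (by simp only [Set.mem_Ici]; linarith) h hxy
      _ ≤ (f b - f a) / (b - a) :=
            hcc.slope_anti_adjacent ha (by simp only [Set.mem_Ici]; linarith) hab h
  rw [div_le_div_iff₀ (by linarith) (by linarith)] at key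
  linarith

private lemma core (p : ℕ) (hp : 2 ≤ p) (c len T : ℝ) (hc0 : 0 ≤ c) (hc1 : c ≤ 1)
    (hlen0 : 0 < len) (hlen1 : len ≤ 1) (hT : 0 ≤ T) (S : Set ℝ) (hSm : MeasurableSet S)
    (hmem : ∀ t ∈ S, 0 ≤ t ∧ t ≤ T ∧ ∃ n : ℤ, c + n ≤ t ^ p ∧ t ^ p ≤ c + n + len)
    (hsub : ∀ (n : ℕ) (t : ℝ), 0 ≤ t → t ≤ T → c + n < t ^ p → t ^ p < c + n + len → t ∈ S) :
    |(volume S).toReal - len * T| ≤ 5 := by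
  have p0 : p ≠ 0 := by omega
  have hTp : (0:ℝ) ≤ T ^ p := by positivity
  have hgT : (T ^ p : ℝ) ^ ((p:ℝ)⁻¹) = T := Real.pow_rpow_inv_natCast hT p0
  -- finiteness
  have hSsub : S ⊆ Set.Icc 0 T := fun t ht => ⟨(hmem t ht).1, (hmem t ht).2.1⟩
  have hfin : volume S ≠ ⊤ := by
    refine lt_top_iff_ne_top.mp (lt_of_le_of_lt (measure_mono hSsub) ?_)
    rw [Real.volume_Icc]; exact ENNReal.ofReal_lt_top
  -- UPPER BOUND
  set N : ℕ := ⌈T ^ p⌉₊ with hN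
  have hcover : S ⊆ Set.Icc 0 ((2:ℝ) ^ ((p:ℝ)⁻¹)) ∪
      ⋃ k ∈ Finset.range N, Set.Icc ((c + k + 1) ^ ((p:ℝ)⁻¹)) ((c + k + 1 + len) ^ ((p:ℝ)⁻¹)) := by
    intro t ht
    obtain ⟨ht0, htT, n, h1, h2⟩ := hmem t ht
    rcases le_or_gt n 0 with hn | hn
    · left
      refine ⟨ht0, (le_g_iff p hp ht0 (by norm_num)).mpr ?_⟩
      have : (n:ℝ) ≤ 0 := by exact_mod_cast hn
      linarith
    · right
      have hn1 : (1:ℝ) ≤ (n:ℝ) := by exact_mod_cast hn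
      have hnle : (n:ℝ) ≤ T ^ p := by
        have : t ^ p ≤ T ^ p := pow_le_pow_left₀ ht0 htT p
        linarith
      have hnN : n ≤ (N:ℤ) := by
        have : (n:ℝ) ≤ (N:ℝ) := le_trans hnle (Nat.le_ceil _)
        exact_mod_cast this
      set k : ℕ := (n - 1).toNat with hk
      have hkc : ((k:ℕ):ℝ) = (n:ℝ) - 1 := by
        have : ((k:ℕ):ℤ) = n - 1 := Int.toNat_of_nonneg (by omega)
        have := congrArg (fun z : ℤ => (z:ℝ)) this
        push_cast at this
        linarith
      have hkN : k ∈ Finset.range N := by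
        simp only [Finset.mem_range]
        omega
      refine Set.mem_biUnion hkN ⟨?_, ?_⟩
      · rw [g_le_iff p hp ht0 (by nlinarith)]
        rw [hkc]; linarith
      · rw [le_g_iff p hp ht0 (by nlinarith)]
        rw [hkc]; linarith
  have hupper : (volume S).toReal ≤ len * T + 4 := by
    have hle : volume S ≤ ENNReal.ofReal ((2:ℝ) ^ ((p:ℝ)⁻¹)) +
        ∑ k ∈ Finset.range N, ENNReal.ofReal
          ((c + k + 1 + len) ^ ((p:ℝ)⁻¹) - (c + k + 1) ^ ((p:ℝ)⁻¹)) := by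
      calc volume S ≤ _ := measure_mono hcover
      _ ≤ volume (Set.Icc (0:ℝ) ((2:ℝ) ^ ((p:ℝ)⁻¹))) +
          volume (⋃ k ∈ Finset.range N,
            Set.Icc ((c + k + 1) ^ ((p:ℝ)⁻¹)) ((c + k + 1 + len) ^ ((p:ℝ)⁻¹))) :=
          measure_union_le _ _
      _ ≤ _ := by
          gcongr
          · rw [Real.volume_Icc, sub_zero]
          · calc volume (⋃ k ∈ Finset.range N, Set.Icc ((c + k + 1) ^ ((p:ℝ)⁻¹))
                  ((c + k + 1 + len) ^ ((p:ℝ)⁻¹)))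
                ≤ ∑ k ∈ Finset.range N, volume (Set.Icc ((c + k + 1) ^ ((p:ℝ)⁻¹))
                  ((c + k + 1 + len) ^ ((p:ℝ)⁻¹))) := measure_biUnion_finset_le _ _
            _ = _ := by
                refine Finset.sum_congr rfl fun k _ => ?_
                rw [Real.volume_Icc]
    have hsum : ∑ k ∈ Finset.range N,
        ((c + k + 1 + len) ^ ((p:ℝ)⁻¹) - (c + k + 1) ^ ((p:ℝ)⁻¹))
        ≤ len * ((c + N) ^ ((p:ℝ)⁻¹) - c ^ ((p:ℝ)⁻¹)) := by
      have hterm : ∀ k ∈ Finset.range N,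
          (c + k + 1 + len) ^ ((p:ℝ)⁻¹) - (c + k + 1) ^ ((p:ℝ)⁻¹)
          ≤ len * ((c + (k+1:ℕ)) ^ ((p:ℝ)⁻¹) - (c + (k:ℕ)) ^ ((p:ℝ)⁻¹)) := by
        intro k _
        have := slope_ineq p hp (a := c + k) (b := c + k + 1) (x := c + k + 1)
          (y := c + k + 1 + len) (by positivity) (by linarith) le_rfl (by linarith)
        push_cast
        ring_nf at this ⊢
        nlinarith
      calc _ ≤ ∑ k ∈ Finset.range N,
          len * ((c + (k+1:ℕ)) ^ ((p:ℝ)⁻¹) - (c + (k:ℕ)) ^ ((p:ℝ)⁻¹)) :=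
            Finset.sum_le_sum hterm
      _ = len * ((c + (N:ℕ)) ^ ((p:ℝ)⁻¹) - (c + (0:ℕ)) ^ ((p:ℝ)⁻¹)) := by
            rw [← Finset.mul_sum, Finset.sum_range_sub (fun k : ℕ => (c + (k:ℕ)) ^ ((p:ℝ)⁻¹))]
      _ = _ := by norm_num
    have hgN : (c + N : ℝ) ^ ((p:ℝ)⁻¹) ≤ T + 2 := by
      have h1 : (c + N : ℝ) ≤ T ^ p + 2 := by
        have := Nat.ceil_lt_add_one hTp
        rw [← hN] at this
        linarith
      calc (c + N : ℝ) ^ ((p:ℝ)⁻¹) ≤ (T ^ p + 2) ^ ((p:ℝ)⁻¹) :=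
            Real.rpow_le_rpow (by positivity) h1 (le_of_lt (hq0 p hp))
      _ ≤ (T ^ p) ^ ((p:ℝ)⁻¹) + (2:ℝ) ^ ((p:ℝ)⁻¹) := g_add_le p hp hTp (by norm_num)
      _ ≤ T + 2 := by rw [hgT]; linarith [g_two_le p hp]
    have htnn : ∀ k ∈ Finset.range N, (0:ℝ) ≤
        (c + k + 1 + len) ^ ((p:ℝ)⁻¹) - (c + k + 1) ^ ((p:ℝ)⁻¹) := by
      intro k _
      have := Real.rpow_le_rpow (x := c+k+1) (y := c+k+1+len) (by positivity)
        (by linarith) (le_of_lt (hq0 p hp))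
      linarith
    rw [← ENNReal.ofReal_sum_of_nonneg htnn,
      ← ENNReal.ofReal_add (by positivity) (Finset.sum_nonneg htnn)] at hle
    have h2 := ENNReal.toReal_le_of_le_ofReal
      (add_nonneg (by positivity) (Finset.sum_nonneg htnn)) hle
    have hgc : (0:ℝ) ≤ c ^ ((p:ℝ)⁻¹) := by positivity
    have hgcN : (0:ℝ) ≤ (c+N:ℝ) ^ ((p:ℝ)⁻¹) := by positivity
    nlinarith [g_two_le p hp]
  -- LOWER BOUND
  have hlower : len * T - 5 ≤ (volume S).toReal := by
    rcases le_or_gt T 4 with hT4 | hT4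
    · have : (0:ℝ) ≤ (volume S).toReal := ENNReal.toReal_nonneg
      nlinarith
    · set M : ℕ := ⌊T ^ p⌋₊ - 1 with hM
      have hTpge : (4:ℝ) < T ^ p := by
        calc (4:ℝ) < T := hT4
        _ = T ^ 1 := (pow_one T).symm
        _ ≤ T ^ p := pow_le_pow_right₀ (by linarith) (by omega)
      have hfl1 : 1 ≤ ⌊T ^ p⌋₊ := Nat.le_floor (by exact_mod_cast (by linarith : (1:ℝ) ≤ T ^ p))
      have hMcast : ((M:ℕ):ℝ) + 1 = (⌊T ^ p⌋₊ : ℝ) := by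
        have : (M:ℕ) + 1 = ⌊T ^ p⌋₊ := by omega
        exact_mod_cast congrArg (fun n : ℕ => (n:ℝ)) this
      have hfl_le : (⌊T ^ p⌋₊ : ℝ) ≤ T ^ p := Nat.floor_le hTp
      have hfl_gt : T ^ p - 1 < (⌊T ^ p⌋₊ : ℝ) := by
        have := Nat.lt_floor_add_one (T ^ p)
        linarith
      -- the disjoint intervals
      have hUS : ∀ k ∈ Finset.range M,
          Set.Ioo ((c + k : ℝ) ^ ((p:ℝ)⁻¹)) ((c + k + len) ^ ((p:ℝ)⁻¹)) ⊆ S := by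
        intro k hkr t ht
        have hk : (k:ℝ) ≤ (M:ℝ) - 1 := by
          have : k + 1 ≤ M := Finset.mem_range.mp hkr
          have : ((k:ℕ):ℝ) + 1 ≤ (M:ℝ) := by exact_mod_cast this
          linarith
      -- bounds for t
        have ht0 : 0 ≤ t := le_trans (by positivity) (le_of_lt ht.1)
        have hklen : c + k + len ≤ T ^ p := by linarith [hMcast, hfl_le]
        have h1 : c + k < t ^ p := (g_lt_iff p hp ht0 (by positivity)).mp ht.1
        have h2 : t ^ p < c + k + len := (lt_g_iff p hp ht0 (by positivity)).mp ht.2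
        have htT : t ≤ T := by
          rw [← hgT]
          exact (le_g_iff p hp ht0 hTp).mpr (by linarith)
        exact hsub k t ht0 htT h1 h2
      have hdisj : (↑(Finset.range M) : Set ℕ).PairwiseDisjoint
          (fun k : ℕ => Set.Ioo ((c + k : ℝ) ^ ((p:ℝ)⁻¹)) ((c + k + len) ^ ((p:ℝ)⁻¹))) := by
        have key : ∀ i j : ℕ, i < j → Disjoint
            (Set.Ioo ((c + i : ℝ) ^ ((p:ℝ)⁻¹)) ((c + i + len) ^ ((p:ℝ)⁻¹)))
            (Set.Ioo ((c + j : ℝ) ^ ((p:ℝ)⁻¹)) ((c + j + len) ^ ((p:ℝ)⁻¹))) := by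
          intro i j hij
          rw [Set.disjoint_left]
          intro t hti htj
          have hij' : (i:ℝ) + 1 ≤ (j:ℝ) := by exact_mod_cast hij
          have : (c + i + len : ℝ) ^ ((p:ℝ)⁻¹) ≤ (c + j : ℝ) ^ ((p:ℝ)⁻¹) :=
            Real.rpow_le_rpow (by positivity) (by linarith) (le_of_lt (hq0 p hp))
          exact absurd (lt_of_lt_of_le hti.2 this) (not_lt.mpr (le_of_lt htj.1))
        intro i _ j _ hij
        rcases lt_or_gt_of_ne hij with h | h
        · exact key i j h
        · exact (key j i h).symm
      have hvol : ∑ k ∈ Finset.range M, ENNReal.ofReal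
            ((c + k + len : ℝ) ^ ((p:ℝ)⁻¹) - (c + k : ℝ) ^ ((p:ℝ)⁻¹)) ≤ volume S := by
        have e1 : ∀ k ∈ Finset.range M, ENNReal.ofReal
            ((c + k + len : ℝ) ^ ((p:ℝ)⁻¹) - (c + k : ℝ) ^ ((p:ℝ)⁻¹))
            = volume (Set.Ioo ((c + k : ℝ) ^ ((p:ℝ)⁻¹)) ((c + k + len : ℝ) ^ ((p:ℝ)⁻¹))) := by
          intro k _
          rw [Real.volume_Ioo]
        rw [Finset.sum_congr rfl e1,
          ← measure_biUnion_finset hdisj (fun k _ => measurableSet_Ioo)]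
        exact measure_mono (Set.iUnion₂_subset hUS)
      have hsum : len * T - 5 ≤ ∑ k ∈ Finset.range M,
          ((c + k + len : ℝ) ^ ((p:ℝ)⁻¹) - (c + k : ℝ) ^ ((p:ℝ)⁻¹)) := by
        have hterm : ∀ k ∈ Finset.range M,
            len * ((c + (k+1:ℕ) + 1) ^ ((p:ℝ)⁻¹) - (c + (k:ℕ) + 1) ^ ((p:ℝ)⁻¹))
            ≤ (c + k + len : ℝ) ^ ((p:ℝ)⁻¹) - (c + k : ℝ) ^ ((p:ℝ)⁻¹) := by
          intro k _
          have := slope_ineq p hp (a := c + k) (b := c + k + len) (x := c + k + 1)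
            (y := c + k + 2) (by positivity) (by linarith) (by linarith) (by linarith)
          push_cast
          ring_nf at this ⊢
          nlinarith
        have htel : ∑ k ∈ Finset.range M,
            len * ((c + (k+1:ℕ) + 1) ^ ((p:ℝ)⁻¹) - (c + (k:ℕ) + 1) ^ ((p:ℝ)⁻¹))
            = len * ((c + (M:ℕ) + 1) ^ ((p:ℝ)⁻¹) - (c + (0:ℕ) + 1) ^ ((p:ℝ)⁻¹)) := by
          rw [← Finset.mul_sum, Finset.sum_range_sub (fun k : ℕ => (c + (k:ℕ) + 1) ^ ((p:ℝ)⁻¹))]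
        have hgM : T - 1 ≤ (c + (M:ℕ) + 1 : ℝ) ^ ((p:ℝ)⁻¹) := by
          have harg : T ^ p - 1 ≤ c + (M:ℕ) + 1 := by
            linarith [hMcast, hfl_gt]
          have h2 : (T ^ p - 1 : ℝ) ^ ((p:ℝ)⁻¹) ≤ (c + (M:ℕ) + 1 : ℝ) ^ ((p:ℝ)⁻¹) :=
            Real.rpow_le_rpow (by linarith) harg (le_of_lt (hq0 p hp))
          have h3 : (T ^ p : ℝ) ^ ((p:ℝ)⁻¹) ≤ (T ^ p - 1 : ℝ) ^ ((p:ℝ)⁻¹) + 1 := by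
            have := g_add_le p hp (x := T ^ p - 1) (y := 1) (by linarith) (by norm_num)
            rw [Real.one_rpow] at this
            calc (T ^ p : ℝ) ^ ((p:ℝ)⁻¹) = (T ^ p - 1 + 1 : ℝ) ^ ((p:ℝ)⁻¹) := by ring_nf
            _ ≤ _ := this
          rw [hgT] at h3
          linarith
        have hg1 : (c + (0:ℕ) + 1 : ℝ) ^ ((p:ℝ)⁻¹) ≤ 2 := by
          calc (c + (0:ℕ) + 1 : ℝ) ^ ((p:ℝ)⁻¹) ≤ (2:ℝ) ^ ((p:ℝ)⁻¹) :=
                Real.rpow_le_rpow (by positivity) (by push_cast; linarith) (le_of_lt (hq0 p hp))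
          _ ≤ 2 := g_two_le p hp
        calc len * T - 5 ≤ len * ((c + (M:ℕ) + 1) ^ ((p:ℝ)⁻¹) - (c + (0:ℕ) + 1) ^ ((p:ℝ)⁻¹)) := by
              nlinarith
        _ = _ := htel.symm
        _ ≤ _ := Finset.sum_le_sum hterm
      -- put together
      have hofReal : ENNReal.ofReal (∑ k ∈ Finset.range M,
          ((c + k + len : ℝ) ^ ((p:ℝ)⁻¹) - (c + k : ℝ) ^ ((p:ℝ)⁻¹))) ≤ volume S := by
        rw [ENNReal.ofReal_sum_of_nonneg]
        · exact hvol
        · intro k _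
          have := Real.rpow_le_rpow (x := (c+k:ℝ)) (y := c+k+len) (by positivity)
            (by linarith) (le_of_lt (hq0 p hp))
          linarith
      have hsnn : (0:ℝ) ≤ ∑ k ∈ Finset.range M,
          ((c + k + len : ℝ) ^ ((p:ℝ)⁻¹) - (c + k : ℝ) ^ ((p:ℝ)⁻¹)) := by
        refine Finset.sum_nonneg fun k _ => ?_
        have := Real.rpow_le_rpow (x := (c+k:ℝ)) (y := c+k+len) (by positivity)
          (by linarith) (le_of_lt (hq0 p hp))
        linarith
      have := ENNReal.toReal_mono hfin hofReal
      rw [ENNReal.toReal_ofReal hsnn] at this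
      linarith
  rw [abs_le]
  constructor <;> linarith

private lemma keymem (c len y : ℝ) :
    ((y : ℝ) : AddCircle (1:ℝ)) ∈ (fun u : ℝ => (u : AddCircle (1:ℝ))) '' Set.Ico c (c+len)
    ↔ ∃ m : ℤ, c ≤ y + m ∧ y + m < c + len := by
  constructor
  · rintro ⟨x, hx, hxy⟩
    have : x - y ∈ AddSubgroup.zmultiples (1:ℝ) := by
      rwa [QuotientAddGroup.eq_iff_sub_mem] at hxy
    obtain ⟨m, hm⟩ := AddSubgroup.mem_zmultiples_iff.mp this
    exact ⟨m, by simp [zsmul_eq_mul] at hm; constructor <;> [linarith [hx.1]; linarith [hx.2]]⟩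
  · rintro ⟨m, h1, h2⟩
    refine ⟨y + m, ⟨h1, h2⟩, ?_⟩
    rw [QuotientAddGroup.eq_iff_sub_mem]
    exact AddSubgroup.mem_zmultiples_iff.mpr ⟨m, by simp [zsmul_eq_mul]⟩

private lemma core2 (p : ℕ) (hp : 2 ≤ p) (c len T : ℝ) (hc0 : 0 ≤ c) (hc1 : c ≤ 1)
    (hlen0 : 0 < len) (hlen1 : len ≤ 1) (hT : 0 ≤ T) (S : Set ℝ) (P : ℤ → ℝ → Prop)
    (hchar : ∀ t, t ∈ S ↔ 0 ≤ t ∧ t ≤ T ∧ ∃ n : ℤ, P n t)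
    (hPm : ∀ n, MeasurableSet {t | P n t})
    (hP1 : ∀ n t, P n t → c + n ≤ t ^ p ∧ t ^ p ≤ c + n + len)
    (hP2 : ∀ (n : ℤ) (t : ℝ), c + n < t ^ p → t ^ p < c + n + len → P n t) :
    |(volume S).toReal - len * T| ≤ 5 := by
  refine core p hp c len T hc0 hc1 hlen0 hlen1 hT S ?_ ?_ ?_
  · have : S = Set.Icc 0 T ∩ ⋃ n : ℤ, {t | P n t} := by
      ext t
      simp only [hchar t, Set.mem_inter_iff, Set.mem_Icc, Set.mem_iUnion, Set.mem_setOf_eq,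
        and_assoc]
    rw [this]
    exact measurableSet_Icc.inter (MeasurableSet.iUnion fun n => hPm n)
  · intro t ht
    obtain ⟨h0, h1, n, hn⟩ := (hchar t).mp ht
    exact ⟨h0, h1, n, hP1 n t hn⟩
  · intro n t h0 h1 ha hb
    refine (hchar t).mpr ⟨h0, h1, (n:ℤ), hP2 n t ?_ ?_⟩ <;> push_cast <;> [exact ha; exact hb]

private lemma halfline (p : ℕ) (hp : 2 ≤ p) (c len : ℝ) (hlen0 : 0 ≤ len) (hlen1 : len ≤ 1)
    (σ : ℝ) (hσ : σ = -1 ∨ σ = 1) (T : ℝ) (hT : 0 ≤ T) :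
    |(volume {t : ℝ | 0 ≤ t ∧ t ≤ T ∧ ((σ * t ^ p : ℝ) : AddCircle (1:ℝ)) ∈
        (fun u : ℝ => (u : AddCircle (1:ℝ))) '' Set.Ico c (c + len)}).toReal - len * T| ≤ 5 := by
  rcases eq_or_lt_of_le hlen0 with h0 | h0
  · -- len = 0
    have hempty : {t : ℝ | 0 ≤ t ∧ t ≤ T ∧ ((σ * t ^ p : ℝ) : AddCircle (1:ℝ)) ∈
        (fun u : ℝ => (u : AddCircle (1:ℝ))) '' Set.Ico c (c + len)} = ∅ := by
      ext t
      simp only [Set.mem_setOf_eq, Set.mem_empty_iff_false, iff_false, not_and]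
      intro _ _ hm
      rw [keymem] at hm
      obtain ⟨m, hm1, hm2⟩ := hm
      linarith
    rw [hempty]
    simp [← h0]
  · rcases hσ with hσ | hσ <;> subst hσ
    · -- σ = -1
      set F : ℤ := ⌊-(c+len)⌋ with hF
      set d : ℝ := Int.fract (-(c+len)) with hd
      have hdeq : d = -(c+len) - F := (Int.self_sub_floor (-(c+len))).symm
      refine core2 p hp d len T (Int.fract_nonneg _) (le_of_lt (Int.fract_lt_one _))
        h0 hlen1 hT _ (fun n t => d + n < t ^ p ∧ t ^ p ≤ d + n + len) ?_ ?_ ?_ ?_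
      · intro t
        simp only [Set.mem_setOf_eq, and_congr_right_iff]
        intro _ _
        rw [keymem]
        constructor
        · rintro ⟨m, h1, h2⟩
          refine ⟨m + F, ?_, ?_⟩ <;> push_cast <;> linarith [hdeq]
        · rintro ⟨n, h1, h2⟩
          refine ⟨n - F, ?_, ?_⟩ <;> push_cast <;> linarith [hdeq]
      · intro n
        have : {t : ℝ | d + n < t ^ p ∧ t ^ p ≤ d + n + len}
            = (fun t : ℝ => t ^ p) ⁻¹' Set.Ioc (d + n) (d + n + len) := rfl
        rw [this]
        exact (continuous_pow p).measurable measurableSet_Ioc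
      · exact fun n t hn => ⟨le_of_lt hn.1, hn.2⟩
      · exact fun n t h1 h2 => ⟨h1, le_of_lt h2⟩
    · -- σ = 1
      set F : ℤ := ⌊c⌋ with hF
      set d : ℝ := Int.fract c with hd
      have hdeq : d = c - F := (Int.self_sub_floor c).symm
      refine core2 p hp d len T (Int.fract_nonneg _) (le_of_lt (Int.fract_lt_one _))
        h0 hlen1 hT _ (fun n t => d + n ≤ t ^ p ∧ t ^ p < d + n + len) ?_ ?_ ?_ ?_
      · intro t
        simp only [Set.mem_setOf_eq, and_congr_right_iff]
        intro _ _
        rw [keymem]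
        constructor
        · rintro ⟨m, h1, h2⟩
          refine ⟨F - m, ?_, ?_⟩ <;> push_cast <;> linarith [hdeq]
        · rintro ⟨n, h1, h2⟩
          refine ⟨F - n, ?_, ?_⟩ <;> push_cast <;> linarith [hdeq]
      · intro n
        have : {t : ℝ | d + n ≤ t ^ p ∧ t ^ p < d + n + len}
            = (fun t : ℝ => t ^ p) ⁻¹' Set.Ico (d + n) (d + n + len) := rfl
        rw [this]
        exact (continuous_pow p).measurable measurableSet_Ico
      · exact fun n t hn => ⟨hn.1, le_of_lt hn.2⟩
      · exact fun n t h1 h2 => ⟨le_of_lt h1, h2⟩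

/-- One-variable density lemma: for an integer `p ≥ 2`, uniformly over torus intervals `I`
(of length `len`, parametrized as projections of `Set.Ico c (c + len)`), signs `σ ∈ {-1,1}`,
and `R ≥ 1`, the measure of `{t ∈ [-R/2, R/2] : σ t^p mod 1 ∈ I}` is `len·R + O_p(1)`. -/
theorem one_variable_density (p : ℕ) (hp : 2 ≤ p) :
    ∃ C : ℝ, ∀ c len : ℝ, 0 ≤ len → len ≤ 1 → ∀ σ : ℝ, σ = -1 ∨ σ = 1 →
      ∀ R : ℝ, 1 ≤ R →
      |(volume {t : ℝ | t ∈ Set.Icc (-R / 2) (R / 2) ∧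
          ((σ * t ^ p : ℝ) : AddCircle (1 : ℝ)) ∈
            (fun u : ℝ => (u : AddCircle (1 : ℝ))) '' Set.Ico c (c + len)}).toReal
        - len * R| ≤ C := by
  refine ⟨10, ?_⟩
  intro c len hlen0 hlen1 σ hσ R hR
  have hT2 : (0:ℝ) ≤ R / 2 := by linarith
  set img := (fun u : ℝ => (u : AddCircle (1 : ℝ))) '' Set.Ico c (c + len) with himg
  set A := {t : ℝ | t ∈ Set.Icc (-R / 2) (R / 2) ∧
      ((σ * t ^ p : ℝ) : AddCircle (1 : ℝ)) ∈ img} with hA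
  set σ' := σ * (-1 : ℝ) ^ p with hσ'def
  have hsq : ((-1:ℝ)) ^ p * (-1 : ℝ) ^ p = 1 := by
    rcases neg_one_pow_eq_or ℝ p with h | h <;> rw [h] <;> norm_num
  have hσ' : σ' = -1 ∨ σ' = 1 := by
    rcases hσ with h | h <;> rcases neg_one_pow_eq_or ℝ p with h2 | h2 <;>
      rw [hσ'def, h, h2] <;> norm_num
  set Sp := {t : ℝ | 0 ≤ t ∧ t ≤ R / 2 ∧ ((σ * t ^ p : ℝ) : AddCircle (1:ℝ)) ∈ img} with hSp
  set Sm := {t : ℝ | 0 ≤ t ∧ t ≤ R / 2 ∧ ((σ' * t ^ p : ℝ) : AddCircle (1:ℝ)) ∈ img} with hSm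
  have hp2 := halfline p hp c len hlen0 hlen1 σ hσ (R/2) hT2
  have hm2 := halfline p hp c len hlen0 hlen1 σ' hσ' (R/2) hT2
  -- positive part
  have e1 : A ∩ Set.Ici 0 = Sp := by
    ext t
    simp only [hA, hSp, Set.mem_inter_iff, Set.mem_setOf_eq, Set.mem_Icc, Set.mem_Ici]
    constructor
    · rintro ⟨⟨⟨_, h2⟩, h3⟩, h4⟩
      exact ⟨h4, h2, h3⟩
    · rintro ⟨h1, h2, h3⟩
      exact ⟨⟨⟨by linarith, h2⟩, h3⟩, h1⟩
  -- negative part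
  set Sm' := {t : ℝ | 0 < t ∧ t ≤ R / 2 ∧ ((σ' * t ^ p : ℝ) : AddCircle (1:ℝ)) ∈ img} with hSm'
  have e2 : A ∩ Set.Iio 0 = -Sm' := by
    ext t
    simp only [hA, hSm', Set.mem_inter_iff, Set.mem_setOf_eq, Set.mem_Icc, Set.mem_Iio,
      Set.mem_neg]
    have harg : σ' * (-t) ^ p = σ * t ^ p := by
      rw [neg_pow]
      linear_combination (σ * t ^ p) * hsq
    rw [harg]
    constructor
    · rintro ⟨⟨⟨h1, _⟩, h3⟩, h4⟩
      exact ⟨by linarith, by linarith, h3⟩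
    · rintro ⟨h1, h2, h3⟩
      exact ⟨⟨⟨by linarith, by linarith⟩, h3⟩, by linarith⟩
  have e3 : volume Sm' = volume Sm := by
    refine le_antisymm (measure_mono fun t ht => ⟨le_of_lt ht.1, ht.2⟩) ?_
    have hsub : Sm ⊆ Sm' ∪ {0} := by
      intro t ht
      rcases eq_or_lt_of_le ht.1 with h | h
      · right; simp [← h]
      · left; exact ⟨h, ht.2⟩
    calc volume Sm ≤ volume (Sm' ∪ {0}) := measure_mono hsub
    _ ≤ volume Sm' + volume {0} := measure_union_le _ _
    _ = volume Sm' := by rw [Real.volume_singleton, add_zero]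
  have e4 : volume (A ∩ Set.Iio 0) = volume Sm := by
    rw [e2, Measure.measure_neg, e3]
  -- split
  have hsplit : volume (A ∩ Set.Ici 0) + volume (A \ Set.Ici 0) = volume A :=
    measure_inter_add_diff A measurableSet_Ici
  have hdiff : A \ Set.Ici 0 = A ∩ Set.Iio 0 := by
    rw [Set.diff_eq, Set.compl_Ici]
  -- finiteness
  have hfinp : volume Sp ≠ ⊤ := by
    have hsub : Sp ⊆ Set.Icc 0 (R/2) := fun t ht => Set.mem_Icc.mpr ⟨ht.1, ht.2.1⟩
    refine (lt_of_le_of_lt (measure_mono hsub) ?_).ne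
    rw [Real.volume_Icc]; exact ENNReal.ofReal_lt_top
  have hfinm : volume Sm ≠ ⊤ := by
    have hsub : Sm ⊆ Set.Icc 0 (R/2) := fun t ht => Set.mem_Icc.mpr ⟨ht.1, ht.2.1⟩
    refine (lt_of_le_of_lt (measure_mono hsub) ?_).ne
    rw [Real.volume_Icc]; exact ENNReal.ofReal_lt_top
  have hAeq : volume A = volume Sp + volume Sm := by
    rw [← hsplit, hdiff, e4, e1]
  have htoReal : (volume A).toReal = (volume Sp).toReal + (volume Sm).toReal := by
    rw [hAeq, ENNReal.toReal_add hfinp hfinm]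
  rw [htoReal]
  have hhalf : len * R = len * (R/2) + len * (R/2) := by ring
  rw [abs_le] at hp2 hm2 ⊢
  constructor <;> linarith
end

section
/- Let p ≥ 2 be an integer, let a ∈ (0,1), and let m ≥ 1 be an integer. Then a·((m+1)^{1/p} - m^{1/p}) ≤ (m+a)^{1/p} - m^{1/p} ≤ a·((m+1)^{1/p} - m^{1/p}) + C_p·m^{-2+1/p} for a constant C_p depending only on p. -/
set_option maxHeartbeats 800000

/-- Mean value theorem for real powers on positive reals. -/
lemma rpow_mvt {x y : ℝ} (β : ℝ) (hx : 0 < x) (hxy : x < y) :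
    ∃ c ∈ Set.Ioo x y, y ^ β - x ^ β = β * c ^ (β - 1) * (y - x) := by
  have hcont : ContinuousOn (fun t : ℝ => t ^ β) (Set.Icc x y) := by
    intro t ht
    exact (Real.hasDerivAt_rpow_const (Or.inl (lt_of_lt_of_le hx ht.1).ne')).continuousAt.continuousWithinAt
  have hderiv : ∀ t ∈ Set.Ioo x y, HasDerivAt (fun t : ℝ => t ^ β) (β * t ^ (β - 1)) t :=
    fun t ht => Real.hasDerivAt_rpow_const (Or.inl (lt_trans hx ht.1).ne')
  obtain ⟨c, hc, hceq⟩ := exists_hasDerivAt_eq_slope (fun t : ℝ => t ^ β)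
    (fun t => β * t ^ (β - 1)) hxy hcont hderiv
  refine ⟨c, hc, ?_⟩
  rw [eq_div_iff (sub_ne_zero.mpr hxy.ne')] at hceq
  linarith [hceq]

/-- Key estimate for `p`-th roots: for an integer `p ≥ 2`, `a ∈ (0,1)` and `m ≥ 1`,
`a((m+1)^{1/p} - m^{1/p}) ≤ (m+a)^{1/p} - m^{1/p} ≤ a((m+1)^{1/p} - m^{1/p}) + C_p m^{-2+1/p}`. -/
theorem root_increment_estimate (p : ℕ) (hp : 2 ≤ p) :
    ∃ C : ℝ, ∀ a : ℝ, 0 < a → a < 1 → ∀ m : ℕ, 1 ≤ m →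
      a * (((m : ℝ) + 1) ^ (1 / (p : ℝ)) - (m : ℝ) ^ (1 / (p : ℝ)))
          ≤ ((m : ℝ) + a) ^ (1 / (p : ℝ)) - (m : ℝ) ^ (1 / (p : ℝ)) ∧
      ((m : ℝ) + a) ^ (1 / (p : ℝ)) - (m : ℝ) ^ (1 / (p : ℝ))
          ≤ a * (((m : ℝ) + 1) ^ (1 / (p : ℝ)) - (m : ℝ) ^ (1 / (p : ℝ)))
            + C * (m : ℝ) ^ (-2 + 1 / (p : ℝ)) := by
  set α : ℝ := 1 / (p : ℝ) with hα
  have hp2 : (2 : ℝ) ≤ (p : ℝ) := by exact_mod_cast hp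
  have hα0 : 0 < α := by positivity
  have hα1 : α ≤ 1 / 2 := by
    rw [hα, div_le_div_iff₀ (by linarith) (by norm_num)]; linarith
  refine ⟨1, fun a ha0 ha1 m hm => ?_⟩
  have hm1 : (1 : ℝ) ≤ (m : ℝ) := by exact_mod_cast hm
  have hm0 : (0 : ℝ) < (m : ℝ) := by linarith
  constructor
  · -- lower bound by concavity
    have hconc := (Real.concaveOn_rpow hα0.le (by linarith)).2
      (Set.mem_Ici.mpr hm0.le) (Set.mem_Ici.mpr (by linarith : (0:ℝ) ≤ (m:ℝ)+1))
      (by linarith : (0:ℝ) ≤ 1 - a) ha0.le (by ring)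
    simp only [smul_eq_mul] at hconc
    have hcomb : (1 - a) * (m : ℝ) + a * ((m : ℝ) + 1) = (m : ℝ) + a := by ring
    rw [hcomb] at hconc
    nlinarith [hconc]
  · -- upper bound
    obtain ⟨c, hc, hceq⟩ := rpow_mvt α hm0 (by linarith : (m:ℝ) < (m:ℝ) + a)
    obtain ⟨d, hd, hdeq⟩ := rpow_mvt α hm0 (by linarith : (m:ℝ) < (m:ℝ) + 1)
    obtain ⟨e, he, heeq⟩ := rpow_mvt (α - 1) hm0 (by linarith : (m:ℝ) < (m:ℝ) + 1)
    have hc0 : (0:ℝ) < c := lt_trans hm0 hc.1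
    have hd0 : (0:ℝ) < d := lt_trans hm0 hd.1
    have he0 : (0:ℝ) < e := lt_trans hm0 he.1
    -- c^{α-1} ≤ m^{α-1}
    have h1 : c ^ (α - 1) ≤ (m:ℝ) ^ (α - 1) :=
      Real.rpow_le_rpow_of_nonpos hm0 hc.1.le (by linarith)
    -- (m+1)^{α-1} ≤ d^{α-1}
    have h2 : ((m:ℝ) + 1) ^ (α - 1) ≤ d ^ (α - 1) :=
      Real.rpow_le_rpow_of_nonpos hd0 hd.2.le (by linarith)
    -- e^{α-2} ≤ m^{α-2}
    have h3 : e ^ (α - 1 - 1) ≤ (m:ℝ) ^ (α - 1 - 1) :=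
      Real.rpow_le_rpow_of_nonpos hm0 he.1.le (by linarith)
    have hmpow : (0:ℝ) < (m:ℝ) ^ (α - 1 - 1) := Real.rpow_pos_of_pos hm0 _
    have hmexp : (m:ℝ) ^ (-2 + α) = (m:ℝ) ^ (α - 1 - 1) := by ring_nf
    rw [hmexp]
    have hepow : (0:ℝ) < e ^ (α - 1 - 1) := Real.rpow_pos_of_pos he0 _
    -- f(m+a)-f(m) = α c^{α-1} a ≤ α m^{α-1} a
    -- a(f(m+1)-f(m)) = a α d^{α-1} ≥ a α (m+1)^{α-1}
    -- m^{α-1} - (m+1)^{α-1} = (1-α) e^{α-2} ≤ (1-α) m^{α-2}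
    have key : (m:ℝ) ^ (α - 1) - ((m:ℝ) + 1) ^ (α - 1) = (1 - α) * e ^ (α - 1 - 1) := by
      have := heeq; nlinarith [heeq]
    have s1 : ((m:ℝ) + a) ^ α - (m:ℝ) ^ α = a * α * c ^ (α - 1) := by rw [hceq]; ring
    have s2 : a * (((m:ℝ) + 1) ^ α - (m:ℝ) ^ α) = a * α * d ^ (α - 1) := by rw [hdeq]; ring
    have t1 : a * α * c ^ (α - 1) ≤ a * α * (m:ℝ) ^ (α - 1) :=
      mul_le_mul_of_nonneg_left h1 (by positivity)
    have t2 : a * α * ((m:ℝ) + 1) ^ (α - 1) ≤ a * α * d ^ (α - 1) :=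
      mul_le_mul_of_nonneg_left h2 (by positivity)
    have t3 : a * α * ((m:ℝ) ^ (α - 1) - ((m:ℝ) + 1) ^ (α - 1))
        = a * α * (1 - α) * e ^ (α - 1 - 1) := by rw [key]; ring
    have t4 : a * α * (1 - α) * e ^ (α - 1 - 1) ≤ a * α * (1 - α) * (m:ℝ) ^ (α - 1 - 1) :=
      mul_le_mul_of_nonneg_left h3 (mul_nonneg (mul_nonneg ha0.le hα0.le) (by linarith))
    have hfac : a * α * (1 - α) ≤ 1 := by
      have h' : a * α ≤ 1 := by nlinarith
      have h'' := mul_le_mul_of_nonneg_right h' (by linarith : (0:ℝ) ≤ 1 - α)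
      linarith
    have t5 : a * α * (1 - α) * (m:ℝ) ^ (α - 1 - 1) ≤ 1 * (m:ℝ) ^ (α - 1 - 1) :=
      mul_le_mul_of_nonneg_right hfac hmpow.le
    rw [s1, s2]
    linarith [t1, t2, t3, t4, t5]
end

section
/- Let n ≥ 4, set m = ⌊n^{1/2}⌋, A = 1/m^2, and P = {0, 1, …, m^2 - 1}. Then for every B ∈ ℝ, the set {(A·k^2 + B·k) mod 1 : k ∈ P} ⊆ ℝ/ℤ intersects every interval on ℝ/ℤ of length 5/m. -/
lemma coe_add_int_eq (x : ℝ) (z : ℤ) : ((x + z : ℝ) : AddCircle (1:ℝ)) = (x : AddCircle (1:ℝ)) := by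
  have h0 : (((z : ℝ)) : AddCircle (1:ℝ)) = 0 := by
    rw [AddCircle.coe_eq_zero_iff]
    exact ⟨z, by simp⟩
  calc ((x + z : ℝ) : AddCircle (1:ℝ)) = (x : AddCircle (1:ℝ)) + ((z:ℝ) : AddCircle (1:ℝ)) := rfl
    _ = (x : AddCircle (1:ℝ)) := by rw [h0, add_zero]

lemma aux_base (m : ℕ) (hm : 3 ≤ m) (β : ℝ) :
    ∃ (k₀ : ℕ) (N : ℤ), k₀ + m < m^2 ∧
      1/(m:ℝ) ≤ β + 2*(k₀:ℝ)/(m:ℝ)^2 - N ∧ β + 2*(k₀:ℝ)/(m:ℝ)^2 - N < 2/(m:ℝ) := by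
  have hm0 : (0:ℝ) < m := by
    have : (0:ℕ) < m := by omega
    exact_mod_cast this
  have hm3 : (3:ℝ) ≤ m := by exact_mod_cast hm
  set a : ℝ := (m:ℝ)^2 * (⌈β⌉ - β) with ha_def
  have ha0 : 0 ≤ a := by
    have := Int.le_ceil β
    have h2 : (0:ℝ) ≤ (⌈β⌉:ℝ) - β := by linarith
    positivity
  have ha1 : a < (m:ℝ)^2 := by
    have := Int.ceil_lt_add_one β
    have h2 : (⌈β⌉:ℝ) - β < 1 := by linarith
    calc a < (m:ℝ)^2 * 1 := by
            apply mul_lt_mul_of_pos_left h2; positivity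
      _ = (m:ℝ)^2 := by ring
  obtain ⟨N, ha'0, ha'1⟩ :
      ∃ N : ℤ, -(m:ℝ) ≤ (m:ℝ)^2 * (N - β) ∧ (m:ℝ)^2 * (N - β) < (m:ℝ)^2 - m := by
    by_cases h : a < (m:ℝ)^2 - m
    · exact ⟨⌈β⌉, by rw [← ha_def]; linarith, by rw [← ha_def]; exact h⟩
    · refine ⟨⌈β⌉ - 1, ?_, ?_⟩ <;>
      · push_cast
        have heq : (m:ℝ)^2 * ((⌈β⌉:ℝ) - 1 - β) = a - (m:ℝ)^2 := by rw [ha_def]; ring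
        rw [heq]
        nlinarith
  set a' : ℝ := (m:ℝ)^2 * (N - β) with ha'_def
  set K : ℤ := ⌈(a' + m)/2⌉ with hK_def
  have hK1 : a' + m ≤ 2*K := by
    have h1 : (a' + m)/2 ≤ (K:ℝ) := Int.le_ceil _
    linarith
  have hK2 : (2*K:ℝ) < a' + m + 2 := by
    have h2 : (K:ℝ) < (a' + m)/2 + 1 := Int.ceil_lt_add_one _
    linarith
  have hK0 : 0 ≤ K := by
    have h1 : (0:ℝ) ≤ 2*K := by linarith
    have h2 : (0:ℝ) ≤ (K:ℝ) := by linarith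
    exact_mod_cast h2
  have hcast : ((K.toNat:ℕ):ℝ) = (K:ℝ) := by
    have : (K.toNat : ℤ) = K := Int.toNat_of_nonneg hK0
    exact_mod_cast this
  have hval : β + 2*((K.toNat:ℕ):ℝ)/(m:ℝ)^2 - N = (2*K - a')/(m:ℝ)^2 := by
    rw [hcast, ha'_def]; field_simp; ring
  refine ⟨K.toNat, N, ?_, ?_, ?_⟩
  · have hr : ((K.toNat + m : ℕ):ℝ) < ((m^2 : ℕ):ℝ) := by
      push_cast
      rw [hcast]
      nlinarith [sq_nonneg ((m:ℝ) - 3)]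
    exact_mod_cast hr
  · rw [hval, div_le_div_iff₀ hm0 (by positivity)]
    nlinarith [mul_nonneg (show (0:ℝ) ≤ 2*(K:ℝ) - a' - m by linarith) hm0.le]
  · rw [hval, div_lt_div_iff₀ (by positivity) hm0]
    nlinarith [mul_lt_mul_of_pos_right (show 2*(K:ℝ) - a' < 2*m by linarith) hm0]

/-- Elementary construction: for `n ≥ 4`, `m = ⌊√n⌋`, `A = 1/m²`, `P = {0,…,m²-1}`,
the set `{(A k² + B k) mod 1 : k ∈ P}` meets every interval of length `5/m` on `ℝ/ℤ`. -/
theorem elementary_equidistribution (n : ℕ) (hn : 4 ≤ n) (B c : ℝ) :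
    ∃ k < Nat.sqrt n ^ 2,
      (((1 / ((Nat.sqrt n : ℝ)) ^ 2) * (k : ℝ) ^ 2 + B * (k : ℝ) : ℝ) : AddCircle (1 : ℝ)) ∈
        (fun t : ℝ => (t : AddCircle (1 : ℝ))) '' Set.Ioo c (c + 5 / (Nat.sqrt n : ℝ)) := by
  classical
  set m := Nat.sqrt n with hm_def
  by_cases hsmall : n < 9
  · -- small case : m = 2, interval longer than 1
    have hm : m = 2 := by
      have h1 : Nat.sqrt 4 ≤ Nat.sqrt n := Nat.sqrt_le_sqrt hn
      have h2 : Nat.sqrt n ≤ Nat.sqrt 8 := Nat.sqrt_le_sqrt (by omega)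
      have e1 : Nat.sqrt 4 = 2 := by
        rw [show (4:ℕ) = 2^2 from rfl, Nat.sqrt_eq']
      have e2 : Nat.sqrt 8 = 2 := by
        have hl : 2 ≤ Nat.sqrt 8 := by
          have : Nat.sqrt 4 ≤ Nat.sqrt 8 := Nat.sqrt_le_sqrt (by omega)
          rw [show (4:ℕ) = 2^2 from rfl, Nat.sqrt_eq'] at this
          exact this
        have hu : Nat.sqrt 8 < 3 := Nat.sqrt_lt'.mpr (by omega)
        omega
      omega
    refine ⟨0, by rw [hm]; norm_num, ?_⟩
    refine ⟨(⌊c⌋:ℝ) + 1, ⟨Int.lt_floor_add_one c, ?_⟩, ?_⟩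
    · have h1 : (⌊c⌋:ℝ) ≤ c := Int.floor_le c
      have : (m:ℝ) = 2 := by rw [hm]; norm_num
      rw [this]
      linarith
    · show (((⌊c⌋:ℝ) + 1 : ℝ) : AddCircle (1:ℝ)) = _
      have hv : (1 / ((m:ℝ))^2 * ((0:ℕ):ℝ)^2 + B*((0:ℕ):ℝ)) = 0 := by push_cast; ring
      rw [hv]
      have := coe_add_int_eq 0 (⌊c⌋ + 1)
      push_cast at this ⊢
      rw [← this]
      norm_num
  · -- main case : m ≥ 3
    have hm3 : 3 ≤ m := by
      have h1 : Nat.sqrt 9 ≤ Nat.sqrt n := Nat.sqrt_le_sqrt (by omega)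
      have e1 : Nat.sqrt 9 = 3 := by
        rw [show (9:ℕ) = 3^2 from rfl, Nat.sqrt_eq']
      omega
    have hm0 : (0:ℝ) < m := by
      have : (0:ℕ) < m := by omega
      exact_mod_cast this
    have hm3R : (3:ℝ) ≤ m := by exact_mod_cast hm3
    obtain ⟨k₀, N, hk₀, hs0l, hs0u⟩ := aux_base m hm3 (B + 1/(m:ℝ)^2)
    set s0 : ℝ := B + 1/(m:ℝ)^2 + 2*(k₀:ℝ)/(m:ℝ)^2 - (N:ℝ) with hs0_def
    set f : ℕ → ℝ := fun k => 1/((m:ℝ))^2 * (k:ℝ)^2 + B*(k:ℝ) with hf_def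
    set v : ℝ := Int.fract (c - f k₀) with hv_def
    have hv0 : 0 ≤ v := Int.fract_nonneg _
    have hv1 : v < 1 := Int.fract_lt_one _
    set T : ℕ → ℝ := fun j => (j:ℝ)*s0 + (j:ℝ)*((j:ℝ)-1)/(m:ℝ)^2 with hT_def
    have hPm : v < T m := by
      show v < (m:ℝ)*s0 + (m:ℝ)*((m:ℝ)-1)/(m:ℝ)^2
      have h1 : (m:ℝ)*(1/m) = 1 := by field_simp
      have h2 : (m:ℝ)*(1/m) ≤ (m:ℝ)*s0 := mul_le_mul_of_nonneg_left hs0l hm0.le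
      have h3 : (0:ℝ) ≤ (m:ℝ)*((m:ℝ)-1)/(m:ℝ)^2 := by
        apply div_nonneg _ (by positivity)
        nlinarith
      linarith
    have hex : ∃ j, v < T j := ⟨m, hPm⟩
    set j := Nat.find hex with hj_def
    have hj : v < T j := Nat.find_spec hex
    have hjm : j ≤ m := Nat.find_le hPm
    have hj1 : 1 ≤ j := by
      by_contra h0
      have hj0 : j = 0 := by omega
      rw [hj0] at hj
      have hT0 : T 0 = 0 := by
        show (0:ℕ)*s0 + ((0:ℕ):ℝ)*(((0:ℕ):ℝ)-1)/(m:ℝ)^2 = 0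
        norm_num
      rw [hT0] at hj
      linarith
    have hprev : ¬ v < T (j-1) := Nat.find_min hex (by omega)
    push_neg at hprev
    have hjcast : ((j-1:ℕ):ℝ) = (j:ℝ) - 1 := by
      rw [Nat.cast_sub hj1]; norm_num
    have hTprev : T (j-1) = ((j:ℝ)-1)*s0 + ((j:ℝ)-1)*((j:ℝ)-2)/(m:ℝ)^2 := by
      show ((j-1:ℕ):ℝ)*s0 + ((j-1:ℕ):ℝ)*(((j-1:ℕ):ℝ)-1)/(m:ℝ)^2 = _
      rw [hjcast]; ring
    have hTj : T j = T (j-1) + s0 + (2*(j:ℝ)-2)/(m:ℝ)^2 := by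
      show (j:ℝ)*s0 + (j:ℝ)*((j:ℝ)-1)/(m:ℝ)^2 = _
      rw [hTprev]; field_simp; ring
    have hjR : (j:ℝ) ≤ m := by exact_mod_cast hjm
    have hjR1 : (1:ℝ) ≤ (j:ℝ) := by exact_mod_cast hj1
    have hTub : T j < v + 5/(m:ℝ) := by
      rw [hTj]
      have h1 : (2*(j:ℝ)-2)/(m:ℝ)^2 ≤ (2*(m:ℝ)-2)/(m:ℝ)^2 := by
        gcongr
      have h2 : (2*(m:ℝ)-2)/(m:ℝ)^2 < 2/(m:ℝ) := by
        rw [div_lt_div_iff₀ (by positivity) hm0]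
        nlinarith
      have h5 : (0:ℝ) < 1/(m:ℝ) := by positivity
      have h6 : (2:ℝ)/m + 2/m + 1/m = 5/m := by ring
      clear_value T s0 v j f
      linarith [hprev, h1, h2, hs0u, h5, h6]
    refine ⟨k₀ + j, lt_of_le_of_lt (by omega) hk₀, ?_⟩
    refine ⟨c + (T j - v), ⟨by linarith, by linarith⟩, ?_⟩
    have hfloor : (⌊c - f k₀⌋ : ℝ) + v = c - f k₀ := Int.floor_add_fract _
    have hc : c = f k₀ + (⌊c - f k₀⌋ : ℝ) + v := by linarith
    have hpoly : f (k₀ + j) = f k₀ + T j + (j:ℝ)*(N:ℝ) := by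
      simp only [hf_def, hT_def, hs0_def]
      push_cast
      field_simp
      ring
    have hkey : f (k₀ + j) = (c + (T j - v)) + (((j:ℤ)*N - ⌊c - f k₀⌋ : ℤ):ℝ) := by
      push_cast
      linarith [hpoly, hfloor]
    show ((c + (T j - v) : ℝ) : AddCircle (1:ℝ)) = ((f (k₀ + j) : ℝ) : AddCircle (1:ℝ))
    rw [hkey, coe_add_int_eq]
end

section
/- Fix integers d ≥ 1 and even p ≥ 2, and ε ∈ (0,1). Define E = {x ∈ ℝ^d : dist(‖x‖_p^p, ℤ) < (1-ε)/2}, where ‖x‖_p^p = ∑_{i=1}^d |x_i|^p. Then |E ∩ [-R/2, R/2]^d| = (1-ε)R^d + O_{d,p}(R^{d-1}) for R ≥ 1; in particular the asymptotic density of E exists and equals 1 - ε. -/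
open MeasureTheory Filter Set

noncomputable def Phi (p : ℕ) (T u : ℝ) : ℝ := min T ((max u 0) ^ ((p:ℝ)⁻¹))

section PhiLemmas
variable {p : ℕ} {T u v : ℝ}

lemma Phi_nonneg (hT : 0 ≤ T) : 0 ≤ Phi p T u :=
  le_min hT (Real.rpow_nonneg (le_max_right _ _) _)

lemma Phi_le_T : Phi p T u ≤ T := min_le_left _ _

lemma Phi_mono (h : u ≤ v) : Phi p T u ≤ Phi p T v :=
  min_le_min le_rfl (Real.rpow_le_rpow (le_max_right _ _) (max_le_max h le_rfl)
    (by positivity))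

lemma Phi_of_nonpos (hp : 0 < p) (hT : 0 ≤ T) (h : u ≤ 0) : Phi p T u = 0 := by
  have : max u 0 = 0 := max_eq_right h
  rw [Phi, this, Real.zero_rpow (by positivity), min_eq_right hT]

lemma Phi_of_ge (hp : 0 < p) (hT : 0 ≤ T) (h : T ^ p ≤ u) : Phi p T u = T := by
  have hu : 0 ≤ u := le_trans (by positivity) h
  have hmax : max u 0 = u := max_eq_left hu
  have : T ≤ (max u 0) ^ ((p:ℝ)⁻¹) := by
    rw [hmax]
    rw [Real.le_rpow_inv_iff_of_pos hT hu (by positivity)]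
    rwa [Real.rpow_natCast]
  rw [Phi, min_eq_left this]

lemma Phi_le_self (hp : 0 < p) (h : 1 ≤ u) : Phi p T u ≤ u := by
  have hmax : max u 0 = u := max_eq_left (by linarith)
  refine le_trans (min_le_right _ _) ?_
  rw [hmax]
  calc u ^ ((p:ℝ)⁻¹) ≤ u ^ (1:ℝ) := by
        apply Real.rpow_le_rpow_of_exponent_le h
        rw [inv_le_one_iff₀]; right; exact_mod_cast hp
    _ = u := Real.rpow_one u

lemma Phi_concaveOn (p : ℕ) (hp : 0 < p) (T : ℝ) :
    ConcaveOn ℝ (Set.Ici 0) (fun s : ℝ => min T (s ^ ((p:ℝ)⁻¹))) := by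
  have h1 : ConcaveOn ℝ (Set.Ici (0:ℝ)) (fun _ : ℝ => T) := concaveOn_const _ (convex_Ici _)
  have h2 : ConcaveOn ℝ (Set.Ici (0:ℝ)) (fun s : ℝ => s ^ ((p:ℝ)⁻¹)) :=
    Real.concaveOn_rpow (by positivity) (by
      rw [inv_le_one_iff₀]; right; exact_mod_cast hp)
  exact h1.inf h2

lemma Phi_eq_on_nonneg (hu : 0 ≤ u) : Phi p T u = min T (u ^ ((p:ℝ)⁻¹)) := by
  rw [Phi, max_eq_left hu]

lemma Phi_upper (hp : 0 < p) {lam s : ℝ} (hl0 : 0 < lam) (hl1 : lam < 1) (hs : 1 ≤ s) :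
    Phi p T (s + lam) - Phi p T s ≤ lam * (Phi p T s - Phi p T (s - 1)) := by
  set f : ℝ → ℝ := fun s : ℝ => min T (s ^ ((p:ℝ)⁻¹)) with hf
  have hc := Phi_concaveOn p hp T
  have key := hc.2 (show s - 1 ∈ Set.Ici (0:ℝ) by simp; linarith)
    (show s + lam ∈ Set.Ici (0:ℝ) by simp; linarith)
    (show (0:ℝ) ≤ lam / (1 + lam) by positivity)
    (show (0:ℝ) ≤ 1 / (1 + lam) by positivity)
    (by field_simp; ring)
  have harg : (lam / (1+lam)) • (s - 1) + (1 / (1+lam)) • (s + lam) = s := by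
    have h1 : (1:ℝ) + lam ≠ 0 := by linarith
    rw [smul_eq_mul, smul_eq_mul, div_mul_eq_mul_div, div_mul_eq_mul_div, ← add_div,
      div_eq_iff h1]; ring
  rw [harg] at key
  have e1 : Phi p T (s + lam) = f (s + lam) := Phi_eq_on_nonneg (by linarith)
  have e2 : Phi p T s = f s := Phi_eq_on_nonneg (by linarith)
  have e3 : Phi p T (s - 1) = f (s - 1) := Phi_eq_on_nonneg (by linarith)
  rw [e1, e2, e3]
  have hpos : (0:ℝ) < 1 + lam := by linarith
  rw [smul_eq_mul, smul_eq_mul] at key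
  have key' : lam / (1+lam) * f (s - 1) + 1 / (1+lam) * f (s + lam) ≤ f s := key
  have key2 : lam * f (s-1) + f (s+lam) ≤ (1+lam) * f s := by
    rw [div_mul_eq_mul_div, div_mul_eq_mul_div, ← add_div, div_le_iff₀ hpos] at key'
    nlinarith [key']
  linarith

lemma Phi_lower (hp : 0 < p) {lam s : ℝ} (hl0 : 0 < lam) (hl1 : lam < 1) (hs : 0 ≤ s) :
    lam * (Phi p T (s + 1) - Phi p T s) ≤ Phi p T (s + lam) - Phi p T s := by
  set f : ℝ → ℝ := fun s : ℝ => min T (s ^ ((p:ℝ)⁻¹)) with hf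
  have hc := Phi_concaveOn p hp T
  have key := hc.2 (show s ∈ Set.Ici (0:ℝ) by simpa)
    (show s + 1 ∈ Set.Ici (0:ℝ) by simp; linarith)
    (show (0:ℝ) ≤ 1 - lam by linarith) (le_of_lt hl0) (by ring)
  have harg : (1 - lam) • s + lam • (s + 1) = s + lam := by
    simp [smul_eq_mul]; ring
  rw [harg] at key
  have e1 : Phi p T (s + lam) = f (s + lam) := Phi_eq_on_nonneg (by linarith)
  have e2 : Phi p T s = f s := Phi_eq_on_nonneg hs
  have e3 : Phi p T (s + 1) = f (s + 1) := Phi_eq_on_nonneg (by linarith)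
  rw [e1, e2, e3]
  rw [smul_eq_mul, smul_eq_mul] at key
  have key' : (1 - lam) * f s + lam * f (s + 1) ≤ f (s + lam) := key
  nlinarith [key']

end PhiLemmas

section VolComp
variable {p : ℕ}

lemma vol_pow_lt (hp : 0 < p) {T : ℝ} (hT : 0 ≤ T) (u : ℝ) :
    volume {t : ℝ | t ∈ Icc 0 T ∧ t ^ p < u} = ENNReal.ofReal (Phi p T u) := by
  rcases le_or_gt u 0 with hu | hu
  · have : {t : ℝ | t ∈ Icc 0 T ∧ t ^ p < u} = ∅ := by
      ext t; simp only [mem_setOf_eq, mem_empty_iff_false, iff_false, not_and, mem_Icc]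
      rintro ⟨ht0, -⟩ h
      nlinarith [pow_nonneg ht0 p]
    rw [this, Phi_of_nonpos hp hT hu]
    simp
  · set r := u ^ ((p:ℝ)⁻¹) with hr
    have hr0 : 0 ≤ r := Real.rpow_nonneg hu.le _
    have key : ∀ t : ℝ, 0 ≤ t → (t ^ p < u ↔ t < r) := by
      intro t ht
      rw [hr, Real.lt_rpow_inv_iff_of_pos ht hu.le (by positivity), Real.rpow_natCast]
    have hPhi : Phi p T u = min T r := by
      rw [Phi, max_eq_left hu.le]
    rcases le_or_gt r T with hrT | hrT
    · have : {t : ℝ | t ∈ Icc 0 T ∧ t ^ p < u} = Ico 0 r := by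
        ext t
        simp only [mem_setOf_eq, mem_Icc, mem_Ico]
        constructor
        · rintro ⟨⟨h1, h2⟩, h3⟩; exact ⟨h1, (key t h1).1 h3⟩
        · rintro ⟨h1, h2⟩; exact ⟨⟨h1, le_trans h2.le hrT⟩, (key t h1).2 h2⟩
      rw [this, Real.volume_Ico, hPhi, min_eq_right hrT, sub_zero]
    · have : {t : ℝ | t ∈ Icc 0 T ∧ t ^ p < u} = Icc 0 T := by
        ext t
        simp only [mem_setOf_eq, mem_Icc]
        constructor
        · rintro ⟨h, -⟩; exact h
        · rintro ⟨h1, h2⟩; exact ⟨⟨h1, h2⟩, (key t h1).2 (lt_of_le_of_lt h2 hrT)⟩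
      rw [this, Real.volume_Icc, hPhi, min_eq_left hrT.le, sub_zero]

lemma vol_pow_le (hp : 0 < p) {T : ℝ} (hT : 0 ≤ T) (u : ℝ) :
    volume {t : ℝ | t ∈ Icc 0 T ∧ t ^ p ≤ u} = ENNReal.ofReal (Phi p T u) := by
  rcases lt_or_ge u 0 with hu | hu
  · have : {t : ℝ | t ∈ Icc 0 T ∧ t ^ p ≤ u} = ∅ := by
      ext t; simp only [mem_setOf_eq, mem_empty_iff_false, iff_false, not_and, mem_Icc]
      rintro ⟨ht0, -⟩ h
      nlinarith [pow_nonneg ht0 p]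
    rw [this, Phi_of_nonpos hp hT hu.le]
    simp
  · set r := u ^ ((p:ℝ)⁻¹) with hr
    have hr0 : 0 ≤ r := Real.rpow_nonneg hu _
    have key : ∀ t : ℝ, 0 ≤ t → (t ^ p ≤ u ↔ t ≤ r) := by
      intro t ht
      rw [hr, Real.le_rpow_inv_iff_of_pos ht hu (by positivity), Real.rpow_natCast]
    have hPhi : Phi p T u = min T r := by
      rw [Phi, max_eq_left hu]
    have : {t : ℝ | t ∈ Icc 0 T ∧ t ^ p ≤ u} = Icc 0 (min T r) := by
      ext t
      simp only [mem_setOf_eq, mem_Icc, le_min_iff]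
      constructor
      · rintro ⟨⟨h1, h2⟩, h3⟩; exact ⟨h1, h2, (key t h1).1 h3⟩
      · rintro ⟨h1, h2, h3⟩; exact ⟨⟨h1, h2⟩, (key t h1).2 h3⟩
    rw [this, Real.volume_Icc, hPhi, sub_zero]

end VolComp

section Core
variable {p : ℕ}

lemma vol_band (hp : 0 < p) {T : ℝ} (hT : 0 ≤ T) {a b : ℝ} (hab : a < b) :
    volume {t : ℝ | t ∈ Icc 0 T ∧ t ^ p ∈ Ioo a b} =
      ENNReal.ofReal (Phi p T b - Phi p T a) := by
  have hset : {t : ℝ | t ∈ Icc 0 T ∧ t ^ p ∈ Ioo a b} =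
      {t : ℝ | t ∈ Icc 0 T ∧ t ^ p < b} \ {t : ℝ | t ∈ Icc 0 T ∧ t ^ p ≤ a} := by
    ext t
    simp only [mem_setOf_eq, mem_Ioo, mem_diff, not_and, not_le]
    constructor
    · rintro ⟨h1, h2, h3⟩; exact ⟨⟨h1, h3⟩, fun _ => h2⟩
    · rintro ⟨⟨h1, h2⟩, h3⟩; exact ⟨h1, h3 h1, h2⟩
  have hsub : {t : ℝ | t ∈ Icc 0 T ∧ t ^ p ≤ a} ⊆ {t : ℝ | t ∈ Icc 0 T ∧ t ^ p < b} :=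
    fun t ⟨h1, h2⟩ => ⟨h1, lt_of_le_of_lt h2 hab⟩
  have hmeas : MeasurableSet {t : ℝ | t ∈ Icc 0 T ∧ t ^ p ≤ a} := by
    have : {t : ℝ | t ∈ Icc 0 T ∧ t ^ p ≤ a} = Icc 0 T ∩ (fun t : ℝ => t ^ p) ⁻¹' Iic a := rfl
    rw [this]
    exact measurableSet_Icc.inter ((continuous_pow p).measurable measurableSet_Iic)
  have hfin : volume {t : ℝ | t ∈ Icc 0 T ∧ t ^ p ≤ a} ≠ ⊤ := by
    rw [vol_pow_le hp hT]; exact ENNReal.ofReal_ne_top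
  rw [hset, measure_diff hsub hmeas.nullMeasurableSet hfin, vol_pow_lt hp hT,
    vol_pow_le hp hT, ← ENNReal.ofReal_sub _ (Phi_nonneg hT)]

lemma sum_Ioc_tele (f : ℤ → ℝ) (a : ℤ) : ∀ b, a ≤ b →
    ∑ m ∈ Finset.Ioc a b, (f m - f (m - 1)) = f b - f a := by
  refine Int.le_induction ?_ ?_
  · simp
  · intro b hb ih
    have hsingle : Finset.Ioc b (b + 1) = {b + 1} := by
      ext x; simp only [Finset.mem_Ioc, Finset.mem_singleton]; omega
    have hdisj : Disjoint (Finset.Ioc a b) (Finset.Ioc b (b + 1)) := by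
      rw [Finset.disjoint_left]; intro x hx hx'
      simp only [Finset.mem_Ioc] at hx hx'; omega
    rw [← Finset.Ioc_union_Ioc_eq_Ioc hb (by omega : b ≤ b + 1), Finset.sum_union hdisj, ih,
      hsingle, Finset.sum_singleton]
    ring_nf

lemma core_s17 (hp : 2 ≤ p) {lam c T : ℝ} (hl0 : 0 < lam) (hl1 : lam < 1) (hT : 0 ≤ T) :
    |(volume {t : ℝ | t ∈ Icc 0 T ∧ ∃ m : ℤ, |c + t ^ p - (m:ℝ)| < lam / 2}).toReal
      - lam * T| ≤ 16 := by
  have hp0 : 0 < p := by omega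
  set a : ℤ → ℝ := fun m => (m:ℝ) - lam / 2 - c with ha
  set S : Set ℝ := {t : ℝ | t ∈ Icc 0 T ∧ ∃ m : ℤ, |c + t ^ p - (m:ℝ)| < lam / 2} with hSdef
  set Sm : ℤ → Set ℝ := fun m => {t : ℝ | t ∈ Icc 0 T ∧ t ^ p ∈ Ioo (a m) (a m + lam)}
    with hSm
  have hab : ∀ m : ℤ, a m < a m + lam := fun m => by linarith
  have hS : S = ⋃ m : ℤ, Sm m := by
    ext t
    simp only [hSdef, hSm, mem_setOf_eq, mem_iUnion, mem_Ioo, ha]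
    constructor
    · rintro ⟨h1, m, hm⟩
      rw [abs_lt] at hm
      exact ⟨m, h1, by constructor <;> linarith [hm.1, hm.2]⟩
    · rintro ⟨m, h1, h2, h3⟩
      exact ⟨h1, m, by rw [abs_lt]; constructor <;> linarith⟩
  have hmeas : ∀ m : ℤ, MeasurableSet (Sm m) := by
    intro m
    have : Sm m = Icc 0 T ∩ (fun t : ℝ => t ^ p) ⁻¹' Ioo (a m) (a m + lam) := rfl
    rw [this]
    exact measurableSet_Icc.inter ((continuous_pow p).measurable measurableSet_Ioo)
  have hdisj : Pairwise (Function.onFun Disjoint Sm) := by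
    intro m m' hne
    rw [Function.onFun, Set.disjoint_left]
    rintro t ⟨-, ht1, ht2⟩ ⟨-, ht3, ht4⟩
    have h1 : (1:ℝ) ≤ |(m:ℝ) - (m':ℝ)| := by
      have : (1:ℤ) ≤ |m - m'| := Int.one_le_abs (sub_ne_zero.mpr hne)
      calc (1:ℝ) = ((1:ℤ):ℝ) := by norm_num
        _ ≤ |((m - m' : ℤ) : ℝ)| := by rw [← Int.cast_abs]; exact_mod_cast this
        _ = |(m:ℝ) - (m':ℝ)| := by push_cast; ring_nf
    simp only [ha] at ht1 ht2 ht3 ht4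
    rcases abs_cases ((m:ℝ) - (m':ℝ)) with ⟨heq, -⟩ | ⟨heq, -⟩ <;> rw [heq] at h1 <;> linarith
  have hvol : volume S = ∑' m : ℤ, volume (Sm m) := by
    rw [hS]; exact measure_iUnion hdisj hmeas
  have hvolm : ∀ m : ℤ, volume (Sm m) =
      ENNReal.ofReal (Phi p T (a m + lam) - Phi p T (a m)) := fun m =>
    vol_band hp0 hT (hab m)
  set m0 : ℤ := ⌊c⌋ - 1 with hm0
  set m1 : ℤ := ⌊c + T ^ p⌋ + 1 with hm1
  have hsupp : ∀ m : ℤ, m ∉ Finset.Ioc m0 m1 → volume (Sm m) = 0 := by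
    intro m hm
    rw [Finset.mem_Ioc, not_and_or, not_lt, not_le] at hm
    rw [hvolm m, ENNReal.ofReal_eq_zero, sub_nonpos]
    rcases hm with hm | hm
    · -- m ≤ m0 : a m + lam ≤ 0
      have h1 : (m:ℝ) ≤ (⌊c⌋:ℝ) - 1 := by exact_mod_cast hm
      have h2 : (⌊c⌋:ℝ) ≤ c := Int.floor_le c
      have : a m + lam ≤ 0 := by simp only [ha]; linarith
      rw [Phi_of_nonpos hp0 hT this]
      exact Phi_nonneg hT
    · -- m1 < m : Phi (a m) = T
      have h1' : ⌊c + T ^ p⌋ + 2 ≤ m := by omega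
      have h1 : (⌊c + T^p⌋:ℝ) + 2 ≤ (m:ℝ) := by exact_mod_cast h1'
      have h2 : c + T ^ p - 1 < (⌊c + T^p⌋:ℝ) := Int.sub_one_lt_floor _
      have : T ^ p ≤ a m := by simp only [ha]; linarith
      rw [Phi_of_ge hp0 hT this]
      exact Phi_le_T
  have htsum : volume S = ∑ m ∈ Finset.Ioc m0 m1, volume (Sm m) := by
    rw [hvol]; exact tsum_eq_sum hsupp
  have hterm_nonneg : ∀ m : ℤ, 0 ≤ Phi p T (a m + lam) - Phi p T (a m) := fun m =>
    sub_nonneg.mpr (Phi_mono (by linarith))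
  set D : ℝ := ∑ m ∈ Finset.Ioc m0 m1, (Phi p T (a m + lam) - Phi p T (a m)) with hD
  have hvolD : volume S = ENNReal.ofReal D := by
    rw [htsum, hD, ENNReal.ofReal_sum_of_nonneg (fun m _ => hterm_nonneg m)]
    exact Finset.sum_congr rfl fun m _ => hvolm m
  have hDnonneg : 0 ≤ D := Finset.sum_nonneg fun m _ => hterm_nonneg m
  have hSvol : (volume S).toReal = D := by rw [hvolD, ENNReal.toReal_ofReal hDnonneg]
  rw [hSvol]
  rw [abs_le]
  rcases le_or_gt T 4 with hT4 | hT4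
  · -- small T : trivial bounds
    have hSsub : S ⊆ Icc 0 T := fun t ht => ht.1
    have hle : volume S ≤ volume (Icc 0 T) := measure_mono hSsub
    rw [hvolD, Real.volume_Icc, sub_zero] at hle
    have hDT : D ≤ T := by
      rwa [ENNReal.ofReal_le_ofReal_iff hT] at hle
    constructor <;> nlinarith
  · set mid : ℤ := ⌊c⌋ + 3 with hmid
    have hfl1 : (⌊c⌋:ℝ) ≤ c := Int.floor_le c
    have hfl2 : c < (⌊c⌋:ℝ) + 1 := Int.lt_floor_add_one c
    have hfl3 : c + T ^ p - 1 < (⌊c + T ^ p⌋:ℝ) := Int.sub_one_lt_floor _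
    have hfl4 : (⌊c + T ^ p⌋:ℝ) ≤ c + T ^ p := Int.floor_le _
    have hTp16 : (16:ℝ) ≤ T ^ p := by
      calc (16:ℝ) = 4 ^ 2 := by norm_num
        _ ≤ 4 ^ p := pow_le_pow_right₀ (by norm_num) hp
        _ ≤ T ^ p := pow_le_pow_left₀ (by norm_num) hT4.le p
    have h0mid : m0 ≤ mid := by omega
    have hmidm1 : mid ≤ m1 := by
      have : (⌊c⌋:ℤ) + 2 ≤ ⌊c + T ^ p⌋ := by
        rw [Int.le_floor]; push_cast; linarith
      omega
    have hdisj2 : Disjoint (Finset.Ioc m0 mid) (Finset.Ioc mid m1) := by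
      rw [Finset.disjoint_left]; intro x hx hx'
      simp only [Finset.mem_Ioc] at hx hx'; omega
    have hDsplit : D = (∑ m ∈ Finset.Ioc m0 mid, (Phi p T (a m + lam) - Phi p T (a m)))
        + ∑ m ∈ Finset.Ioc mid m1, (Phi p T (a m + lam) - Phi p T (a m)) := by
      rw [hD, ← Finset.Ioc_union_Ioc_eq_Ioc h0mid hmidm1, Finset.sum_union hdisj2]
    set D1 : ℝ := ∑ m ∈ Finset.Ioc m0 mid, (Phi p T (a m + lam) - Phi p T (a m)) with hD1
    set D2 : ℝ := ∑ m ∈ Finset.Ioc mid m1, (Phi p T (a m + lam) - Phi p T (a m)) with hD2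
    have hD1nonneg : 0 ≤ D1 := Finset.sum_nonneg fun m _ => hterm_nonneg m
    have hD1le : D1 ≤ 16 := by
      have hbound : ∀ m ∈ Finset.Ioc m0 mid, Phi p T (a m + lam) - Phi p T (a m) ≤ 4 := by
        intro m hm
        rw [Finset.mem_Ioc] at hm
        have hmr : (m:ℝ) ≤ (⌊c⌋:ℝ) + 3 := by exact_mod_cast hm.2
        have harg : a m + lam ≤ 4 := by simp only [ha]; linarith
        have := Phi_nonneg (u := a m) (p := p) hT
        calc Phi p T (a m + lam) - Phi p T (a m) ≤ Phi p T 4 - 0 := by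
              have := Phi_mono (p := p) (T := T) harg; linarith
          _ ≤ 4 := by rw [sub_zero]; exact Phi_le_self hp0 (by norm_num)
      calc D1 ≤ (Finset.Ioc m0 mid).card • (4:ℝ) := Finset.sum_le_card_nsmul _ _ 4 hbound
        _ = ((mid - m0).toNat : ℝ) * 4 := by rw [Int.card_Ioc, nsmul_eq_mul]
        _ = 16 := by
            have h4 : mid - m0 = 4 := by omega
            rw [h4]
            have h5 : (4:ℤ).toNat = 4 := rfl
            rw [h5]; norm_num
    have hmem_a : ∀ m ∈ Finset.Ioc mid m1, 1 ≤ a m := by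
      intro m hm
      rw [Finset.mem_Ioc] at hm
      have hm' : ⌊c⌋ + 4 ≤ m := by omega
      have : (⌊c⌋:ℝ) + 4 ≤ (m:ℝ) := by exact_mod_cast hm'
      simp only [ha]; linarith
    have ha_succ : ∀ m : ℤ, a (m + 1) = a m + 1 := by
      intro m; simp only [ha]; push_cast; ring
    have ha_pred : ∀ m : ℤ, a (m - 1) = a m - 1 := by
      intro m; simp only [ha]; push_cast; ring
    set f : ℤ → ℝ := fun m => Phi p T (a m) with hf
    have hD2le : D2 ≤ lam * T := by
      have step : ∀ m ∈ Finset.Ioc mid m1, Phi p T (a m + lam) - Phi p T (a m)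
          ≤ lam * (f m - f (m - 1)) := by
        intro m hm
        have h1 := hmem_a m hm
        have := Phi_upper (T := T) hp0 hl0 hl1 h1
        simp only [hf, ha_pred m]
        linarith
      calc D2 ≤ ∑ m ∈ Finset.Ioc mid m1, lam * (f m - f (m - 1)) :=
            Finset.sum_le_sum step
        _ = lam * (f m1 - f mid) := by
            rw [← Finset.mul_sum, sum_Ioc_tele f mid m1 hmidm1]
        _ ≤ lam * T := by
            have h1 : f m1 ≤ T := Phi_le_T
            have h2 : 0 ≤ f mid := Phi_nonneg hT
            nlinarith
    have hD2ge : lam * T - 4 ≤ D2 := by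
      set g : ℤ → ℝ := fun m => Phi p T (a (m + 1)) with hg
      have step : ∀ m ∈ Finset.Ioc mid m1, lam * (g m - g (m - 1))
          ≤ Phi p T (a m + lam) - Phi p T (a m) := by
        intro m hm
        have h1 := hmem_a m hm
        have := Phi_lower (T := T) hp0 hl0 hl1 (by linarith : (0:ℝ) ≤ a m)
        simp only [hg, ha_succ m, sub_add_cancel]
        linarith
      have htel : ∑ m ∈ Finset.Ioc mid m1, lam * (g m - g (m - 1))
          = lam * (g m1 - g mid) := by
        rw [← Finset.mul_sum, sum_Ioc_tele g mid m1 hmidm1]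
      have hgm1 : g m1 = T := by
        apply Phi_of_ge hp0 hT
        have : ((m1 + 1 : ℤ):ℝ) = (⌊c + T ^ p⌋:ℝ) + 2 := by simp only [hm1]; push_cast; ring
        simp only [hg, ha, this]; linarith
      have hgmid : g mid ≤ 4 := by
        have harg : a (mid + 1) ≤ 4 := by
          have : ((mid + 1 : ℤ):ℝ) = (⌊c⌋:ℝ) + 4 := by simp only [hmid]; push_cast; ring
          simp only [ha, this]; linarith
        calc g mid ≤ Phi p T 4 := Phi_mono harg
          _ ≤ 4 := Phi_le_self hp0 (by norm_num)
      have := Finset.sum_le_sum step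
      rw [htel] at this
      have hgmid0 : 0 ≤ g mid := Phi_nonneg hT
      nlinarith
    constructor <;> [linarith [hDsplit, hD1nonneg, hD2ge]; linarith [hDsplit, hD1le, hD2le]]

end Core

section Slice
variable {p : ℕ}

lemma slice_meas (p : ℕ) {lam c lo hi : ℝ} :
    MeasurableSet {t : ℝ | t ∈ Icc lo hi ∧ ∃ m : ℤ, |c + |t| ^ p - (m:ℝ)| < lam / 2} := by
  have : {t : ℝ | t ∈ Icc lo hi ∧ ∃ m : ℤ, |c + |t| ^ p - (m:ℝ)| < lam / 2} =
      Icc lo hi ∩ ⋃ m : ℤ, (fun t : ℝ => c + |t| ^ p) ⁻¹' Ioo ((m:ℝ) - lam / 2) ((m:ℝ) + lam / 2) := by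
    ext t
    simp only [mem_setOf_eq, mem_inter_iff, mem_iUnion, mem_preimage, mem_Ioo]
    refine and_congr_right fun _ => exists_congr fun m => ?_
    rw [abs_lt]
    constructor <;> intro h <;> constructor <;> linarith [h.1, h.2]
  rw [this]
  exact measurableSet_Icc.inter (MeasurableSet.iUnion fun m =>
    ((continuous_const.add (continuous_abs.pow p)).measurable measurableSet_Ioo))

lemma slice_vol (hp : 2 ≤ p) {lam c R : ℝ} (hl0 : 0 < lam) (hl1 : lam < 1) (hR : 0 ≤ R) :
    |(volume {t : ℝ | t ∈ Icc (-R / 2) (R / 2) ∧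
        ∃ m : ℤ, |c + |t| ^ p - (m:ℝ)| < lam / 2}).toReal - lam * R| ≤ 32 ∧
    volume {t : ℝ | t ∈ Icc (-R / 2) (R / 2) ∧
        ∃ m : ℤ, |c + |t| ^ p - (m:ℝ)| < lam / 2} ≠ ⊤ := by
  set T : ℝ := R / 2 with hTdef
  have hT : 0 ≤ T := by positivity
  set F : Set ℝ := {t : ℝ | t ∈ Icc (-R / 2) (R / 2) ∧
      ∃ m : ℤ, |c + |t| ^ p - (m:ℝ)| < lam / 2} with hF
  set S : Set ℝ := {t : ℝ | t ∈ Icc 0 T ∧ ∃ m : ℤ, |c + t ^ p - (m:ℝ)| < lam / 2} with hs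
  have hSsub : S ⊆ Icc 0 T := fun t ht => ht.1
  have hSfin : volume S ≠ ⊤ := by
    refine ne_top_of_le_ne_top ?_ (measure_mono hSsub)
    rw [Real.volume_Icc]; exact ENNReal.ofReal_ne_top
  have hF1 : F ∩ Ici 0 = S := by
    ext t
    simp only [hF, hs, mem_inter_iff, mem_setOf_eq, mem_Icc, mem_Ici]
    constructor
    · rintro ⟨⟨⟨h1, h2⟩, h3⟩, h4⟩
      rw [abs_of_nonneg h4] at h3
      exact ⟨⟨h4, h2⟩, h3⟩
    · rintro ⟨⟨h1, h2⟩, h3⟩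
      rw [← abs_of_nonneg h1] at h3
      refine ⟨⟨⟨?_, h2⟩, h3⟩, h1⟩
      have : -R / 2 ≤ 0 := by linarith
      linarith
  have hF2 : F ∩ Iio 0 = Neg.neg ⁻¹' (S ∩ Ioi 0) := by
    ext t
    simp only [hF, hs, mem_inter_iff, mem_setOf_eq, mem_Icc, mem_Iio, mem_preimage, mem_Ioi]
    constructor
    · rintro ⟨⟨⟨h1, h2⟩, h3⟩, h4⟩
      rw [abs_of_nonpos h4.le] at h3
      exact ⟨⟨⟨by linarith, by linarith [neg_div 2 R]⟩, h3⟩, by linarith⟩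
    · rintro ⟨⟨⟨h1, h2⟩, h3⟩, h4⟩
      have ht : t < 0 := by linarith
      rw [← abs_of_nonpos ht.le] at h3
      exact ⟨⟨⟨by linarith [neg_div 2 R], by linarith⟩, h3⟩, ht⟩
  have hvol2 : volume (F ∩ Iio 0) = volume (S ∩ Ioi 0) := by
    rw [hF2]
    have : Neg.neg ⁻¹' (S ∩ Ioi 0) = -(S ∩ Ioi 0) := rfl
    rw [this, Measure.measure_neg]
  have hvol3 : volume (S ∩ Ioi 0) = volume S := by
    have h1 : S ∩ Ioi 0 = S \ (S ∩ Iic 0) := by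
      ext t
      simp only [mem_inter_iff, mem_diff, mem_Ioi, mem_Iic, not_and, not_le]
      tauto
    have h2 : volume (S ∩ Iic 0) = 0 := by
      refine measure_mono_null ?_ (Real.volume_singleton (a := 0))
      rintro t ⟨ht, ht0⟩
      have h0t : 0 ≤ t := (hSsub ht).1
      have ht0' : t ≤ 0 := ht0
      simp only [mem_singleton_iff]
      linarith
    rw [h1, measure_diff_null h2]
  have hsplit : volume F = volume S + volume S := by
    have hdisj : Disjoint (F ∩ Ici 0) (F ∩ Iio 0) :=
      (Set.disjoint_right.mpr fun t ht ht' => not_lt.mpr (show (0:ℝ) ≤ t from ht'.2) ht.2)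
    have hcover : F = (F ∩ Ici 0) ∪ (F ∩ Iio 0) := by
      rw [← Set.inter_union_distrib_left, Set.union_comm, Set.Iio_union_Ici, Set.inter_univ]
    have hmeas2 : MeasurableSet (F ∩ Iio 0) := (slice_meas p).inter measurableSet_Iio
    rw [hcover, measure_union hdisj hmeas2, hF1, hvol2, hvol3]
  have hcore := core_s17 hp hl0 hl1 hT (c := c) (lam := lam)
  rw [← hs] at hcore
  have hFfin : volume F ≠ ⊤ := by
    rw [hsplit]
    exact ENNReal.add_ne_top.mpr ⟨hSfin, hSfin⟩
  refine ⟨?_, hFfin⟩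
  have htr : (volume F).toReal = (volume S).toReal + (volume S).toReal := by
    rw [hsplit, ENNReal.toReal_add hSfin hSfin]
  rw [htr]
  have hRT : lam * R = lam * T + lam * T := by rw [hTdef]; ring
  rw [hRT]
  have h1 := abs_le.mp hcore
  rw [abs_le]
  constructor <;> linarith [h1.1, h1.2]

end Slice

section Main

lemma box_vol (n : ℕ) {R : ℝ} (hR : 0 ≤ R) :
    volume {y : Fin n → ℝ | ∀ i, y i ∈ Icc (-R / 2) (R / 2)} = ENNReal.ofReal R ^ n := by
  have hset : {y : Fin n → ℝ | ∀ i, y i ∈ Icc (-R / 2) (R / 2)} =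
      Set.pi univ fun _ => Icc (-R / 2) (R / 2) := by
    ext y; simp only [mem_setOf_eq, Set.mem_univ_pi]
  rw [hset, volume_pi_pi]
  have : R / 2 - (-R / 2) = R := by ring
  simp [Real.volume_Icc, this]

lemma main_bound (n p : ℕ) (hp : 2 ≤ p) {lam R : ℝ} (hl0 : 0 < lam) (hl1 : lam < 1)
    (hR : 1 ≤ R) :
    |(volume ({x : Fin (n+1) → ℝ | ∃ m : ℤ, |(∑ i, |x i| ^ p) - (m : ℝ)| < lam / 2} ∩
        {x | ∀ i, x i ∈ Set.Icc (-R / 2) (R / 2)})).toReal - lam * R ^ (n+1)| ≤ 32 * R ^ n := by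
  have hR0 : (0:ℝ) ≤ R := by linarith
  set c : (Fin n → ℝ) → ℝ := fun y => ∑ i, |y i| ^ p with hc
  set G : Set (ℝ × (Fin n → ℝ)) := {q | (q.1 ∈ Icc (-R / 2) (R / 2) ∧
      ∃ m : ℤ, |c q.2 + |q.1| ^ p - (m:ℝ)| < lam / 2) ∧ ∀ i, q.2 i ∈ Icc (-R / 2) (R / 2)}
    with hG
  set E : Set (Fin (n+1) → ℝ) :=
    {x : Fin (n+1) → ℝ | ∃ m : ℤ, |(∑ i, |x i| ^ p) - (m : ℝ)| < lam / 2} ∩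
      {x | ∀ i, x i ∈ Set.Icc (-R / 2) (R / 2)} with hE
  set e := MeasurableEquiv.piFinSuccAbove (fun _ : Fin (n+1) => ℝ) 0 with he
  have he_app : ∀ x : Fin (n+1) → ℝ, e x = (x 0, fun j => x j.succ) := by
    intro x
    show ((Fin.insertNthEquiv (fun _ : Fin (n+1) => ℝ) 0).symm x) = _
    rw [Fin.insertNthEquiv_zero]
    rfl
  have hEG : E = e ⁻¹' G := by
    ext x
    simp only [hE, hG, mem_inter_iff, mem_setOf_eq, mem_preimage, he_app x]
    rw [Fin.sum_univ_succ, Fin.forall_fin_succ]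
    constructor
    · rintro ⟨⟨m, hm⟩, h0, hrest⟩
      exact ⟨⟨h0, m, by rw [add_comm] at hm ⊢; convert hm using 3; ring⟩, hrest⟩
    · rintro ⟨⟨h0, m, hm⟩, hrest⟩
      exact ⟨⟨m, by rw [add_comm] at hm ⊢; convert hm using 3; ring⟩, h0, hrest⟩
  have hcont : Continuous fun q : ℝ × (Fin n → ℝ) => c q.2 + |q.1| ^ p := by
    apply Continuous.add
    · exact (continuous_finset_sum Finset.univ fun i _ =>
        ((continuous_apply i).comp continuous_snd).abs.pow p)
    · exact (continuous_fst.abs.pow p)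
  have hGmeas : MeasurableSet G := by
    have h1 : MeasurableSet {q : ℝ × (Fin n → ℝ) | q.1 ∈ Icc (-R / 2) (R / 2)} :=
      measurable_fst measurableSet_Icc
    have h2 : MeasurableSet {q : ℝ × (Fin n → ℝ) |
        ∃ m : ℤ, |c q.2 + |q.1| ^ p - (m:ℝ)| < lam / 2} := by
      have : {q : ℝ × (Fin n → ℝ) | ∃ m : ℤ, |c q.2 + |q.1| ^ p - (m:ℝ)| < lam / 2} =
          ⋃ m : ℤ, (fun q : ℝ × (Fin n → ℝ) => c q.2 + |q.1| ^ p) ⁻¹'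
            Ioo ((m:ℝ) - lam / 2) ((m:ℝ) + lam / 2) := by
        ext q
        simp only [mem_setOf_eq, mem_iUnion, mem_preimage, mem_Ioo]
        refine exists_congr fun m => ?_
        rw [abs_lt]
        constructor <;> intro h <;> constructor <;> linarith [h.1, h.2]
      rw [this]
      exact MeasurableSet.iUnion fun m => hcont.measurable measurableSet_Ioo
    have h3 : MeasurableSet {q : ℝ × (Fin n → ℝ) | ∀ i, q.2 i ∈ Icc (-R / 2) (R / 2)} := by
      have : {q : ℝ × (Fin n → ℝ) | ∀ i, q.2 i ∈ Icc (-R / 2) (R / 2)} =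
          Prod.snd ⁻¹' (Set.pi univ fun _ => Icc (-R / 2) (R / 2)) := by
        ext q; simp only [mem_setOf_eq, mem_preimage, Set.mem_univ_pi]
      rw [this]
      exact measurable_snd (MeasurableSet.univ_pi fun i => measurableSet_Icc)
    exact ((h1.inter h2).inter h3)
  have hvolEG : volume E = (volume.prod volume) G := by
    rw [hEG, show ((volume : Measure ℝ).prod volume) = (volume : Measure (ℝ × (Fin n → ℝ))) from rfl]
    exact (volume_preserving_piFinSuccAbove (fun _ : Fin (n+1) => ℝ) 0).measure_preimage
      hGmeas.nullMeasurableSet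
  have hprod : (volume.prod volume) G
      = ∫⁻ y, volume ((fun t => (t, y)) ⁻¹' G) ∂volume :=
    Measure.prod_apply_symm hGmeas
  -- slice description
  have hslice : ∀ y : Fin n → ℝ, ((fun t => (t, y)) ⁻¹' G) =
      if (∀ i, y i ∈ Icc (-R / 2) (R / 2)) then
        {t : ℝ | t ∈ Icc (-R / 2) (R / 2) ∧ ∃ m : ℤ, |c y + |t| ^ p - (m:ℝ)| < lam / 2}
      else ∅ := by
    intro y
    by_cases hy : ∀ i, y i ∈ Icc (-R / 2) (R / 2)
    · rw [if_pos hy]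
      ext t
      simp only [hG, mem_preimage, mem_setOf_eq]
      tauto
    · rw [if_neg hy]
      ext t
      simp only [hG, mem_preimage, mem_setOf_eq, mem_empty_iff_false, iff_false]
      tauto
  set box : Set (Fin n → ℝ) := {y | ∀ i, y i ∈ Icc (-R / 2) (R / 2)} with hbox
  have hboxmeas : MeasurableSet box := by
    have : box = Set.pi univ fun _ => Icc (-R / 2) (R / 2) := by
      ext y; simp only [hbox, mem_setOf_eq, Set.mem_univ_pi]
    rw [this]
    exact MeasurableSet.univ_pi fun i => measurableSet_Icc
  have hup : ∀ y : Fin n → ℝ, volume ((fun t => (t, y)) ⁻¹' G) ≤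
      box.indicator (fun _ => ENNReal.ofReal (lam * R + 32)) y := by
    intro y
    rw [hslice y]
    by_cases hy : ∀ i, y i ∈ Icc (-R / 2) (R / 2)
    · rw [if_pos hy, Set.indicator_of_mem (by exact hy)]
      obtain ⟨h1, h2⟩ := slice_vol hp hl0 hl1 hR0 (c := c y)
      have h3 := (abs_le.mp h1).2
      calc volume _ = ENNReal.ofReal ((volume {t : ℝ | t ∈ Icc (-R / 2) (R / 2) ∧
            ∃ m : ℤ, |c y + |t| ^ p - (m:ℝ)| < lam / 2}).toReal) := by
            rw [ENNReal.ofReal_toReal h2]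
        _ ≤ ENNReal.ofReal (lam * R + 32) := ENNReal.ofReal_le_ofReal (by linarith)
    · rw [if_neg hy]; simp
  have hlo : ∀ y : Fin n → ℝ, box.indicator (fun _ => ENNReal.ofReal (lam * R - 32)) y ≤
      volume ((fun t => (t, y)) ⁻¹' G) := by
    intro y
    rw [hslice y]
    by_cases hy : ∀ i, y i ∈ Icc (-R / 2) (R / 2)
    · rw [if_pos hy, Set.indicator_of_mem (by exact hy)]
      obtain ⟨h1, h2⟩ := slice_vol hp hl0 hl1 hR0 (c := c y)
      have h3 := (abs_le.mp h1).1
      calc ENNReal.ofReal (lam * R - 32)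
          ≤ ENNReal.ofReal ((volume {t : ℝ | t ∈ Icc (-R / 2) (R / 2) ∧
            ∃ m : ℤ, |c y + |t| ^ p - (m:ℝ)| < lam / 2}).toReal) :=
            ENNReal.ofReal_le_ofReal (by linarith)
        _ = _ := by rw [ENNReal.ofReal_toReal h2]
    · rw [if_neg hy, Set.indicator_of_notMem (by exact hy)]
      exact zero_le
  have hvolbox : volume box = ENNReal.ofReal R ^ n := box_vol n hR0
  have hupper : volume E ≤ ENNReal.ofReal (lam * R + 32) * ENNReal.ofReal R ^ n := by
    rw [hvolEG, hprod]
    calc ∫⁻ y, volume ((fun t => (t, y)) ⁻¹' G) ∂volume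
        ≤ ∫⁻ y, box.indicator (fun _ => ENNReal.ofReal (lam * R + 32)) y ∂volume :=
          lintegral_mono hup
      _ = ENNReal.ofReal (lam * R + 32) * volume box := by
          rw [lintegral_indicator_const hboxmeas]
      _ = _ := by rw [hvolbox]
  have hlower : ENNReal.ofReal (lam * R - 32) * ENNReal.ofReal R ^ n ≤ volume E := by
    rw [hvolEG, hprod]
    calc ENNReal.ofReal (lam * R - 32) * ENNReal.ofReal R ^ n
        = ∫⁻ y, box.indicator (fun _ => ENNReal.ofReal (lam * R - 32)) y ∂volume := by
          rw [lintegral_indicator_const hboxmeas, hvolbox]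
      _ ≤ _ := lintegral_mono hlo
  have hfin : volume E ≠ ⊤ := by
    refine ne_top_of_le_ne_top ?_ hupper
    exact ENNReal.mul_ne_top ENNReal.ofReal_ne_top (ENNReal.pow_ne_top ENNReal.ofReal_ne_top)
  set V : ℝ := (volume E).toReal with hV
  have hVnonneg : 0 ≤ V := ENNReal.toReal_nonneg
  have hRn : (0:ℝ) ≤ R ^ n := by positivity
  have hVup : V ≤ (lam * R + 32) * R ^ n := by
    have := ENNReal.toReal_mono (by
      exact ENNReal.mul_ne_top ENNReal.ofReal_ne_top (ENNReal.pow_ne_top ENNReal.ofReal_ne_top))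
      hupper
    rwa [ENNReal.toReal_mul, ENNReal.toReal_pow, ENNReal.toReal_ofReal (by positivity),
      ENNReal.toReal_ofReal hR0] at this
  have hVlo : (lam * R - 32) * R ^ n ≤ V := by
    rcases le_or_gt (lam * R - 32) 0 with h | h
    · nlinarith
    · have := ENNReal.toReal_mono hfin hlower
      rwa [ENNReal.toReal_mul, ENNReal.toReal_pow, ENNReal.toReal_ofReal h.le,
        ENNReal.toReal_ofReal hR0] at this
  have hpow : lam * R ^ (n+1) = (lam * R) * R ^ n := by ring
  rw [hpow, abs_le]
  constructor <;> nlinarith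

end Main

/-- For even `p ≥ 2` and `ε ∈ (0,1)`, the set `E = {x ∈ ℝᵈ : dist(‖x‖_p^p, ℤ) < (1-ε)/2}`
satisfies `|E ∩ [-R/2,R/2]^d| = (1-ε)R^d + O_{d,p}(R^{d-1})`; in particular its asymptotic
density exists and equals `1 - ε`. Here `‖x‖_p^p = ∑ i, |x i| ^ p`. -/
theorem density_of_annuli (d p : ℕ) (hd : 1 ≤ d) (hp : 2 ≤ p) (hpe : Even p) :
    ∃ C : ℝ, ∀ ε : ℝ, 0 < ε → ε < 1 →
      (∀ R : ℝ, 1 ≤ R →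
        |(volume ({x : Fin d → ℝ | ∃ m : ℤ, |(∑ i, |x i| ^ p) - (m : ℝ)| < (1 - ε) / 2} ∩
            {x | ∀ i, x i ∈ Set.Icc (-R / 2) (R / 2)})).toReal
          - (1 - ε) * R ^ d| ≤ C * R ^ (d - 1)) ∧
      Tendsto (fun R : ℝ =>
          (volume ({x : Fin d → ℝ | ∃ m : ℤ, |(∑ i, |x i| ^ p) - (m : ℝ)| < (1 - ε) / 2} ∩
            {x | ∀ i, x i ∈ Set.Icc (-R / 2) (R / 2)})).toReal / R ^ d)
        atTop (nhds (1 - ε)) := by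
  obtain ⟨n, rfl⟩ : ∃ n, d = n + 1 := ⟨d - 1, by omega⟩
  refine ⟨32, fun ε hε0 hε1 => ?_⟩
  set lam : ℝ := 1 - ε with hlam
  have hl0 : 0 < lam := by simp only [hlam]; linarith
  have hl1 : lam < 1 := by simp only [hlam]; linarith
  have hmain : ∀ R : ℝ, 1 ≤ R →
      |(volume ({x : Fin (n+1) → ℝ | ∃ m : ℤ, |(∑ i, |x i| ^ p) - (m : ℝ)| < lam / 2} ∩
          {x | ∀ i, x i ∈ Set.Icc (-R / 2) (R / 2)})).toReal
        - lam * R ^ (n+1)| ≤ 32 * R ^ n := fun R hR => main_bound n p hp hl0 hl1 hR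
  constructor
  · intro R hR
    have := hmain R hR
    simpa [Nat.add_sub_cancel] using this
  · have hquot : ∀ R : ℝ, 1 ≤ R →
        |(volume ({x : Fin (n+1) → ℝ | ∃ m : ℤ, |(∑ i, |x i| ^ p) - (m : ℝ)| < lam / 2} ∩
            {x | ∀ i, x i ∈ Set.Icc (-R / 2) (R / 2)})).toReal / R ^ (n+1)
          - lam| ≤ 32 / R := by
      intro R hR
      have hRpos : (0:ℝ) < R := by linarith
      have hRd : (0:ℝ) < R ^ (n+1) := by positivity
      set V : ℝ := (volume ({x : Fin (n+1) → ℝ |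
          ∃ m : ℤ, |(∑ i, |x i| ^ p) - (m : ℝ)| < lam / 2} ∩
          {x | ∀ i, x i ∈ Set.Icc (-R / 2) (R / 2)})).toReal with hVd
      have hb := hmain R hR
      rw [← hVd] at hb
      have heq : V / R ^ (n+1) - lam = (V - lam * R ^ (n+1)) / R ^ (n+1) := by
        field_simp
      rw [heq, abs_div, abs_of_pos hRd]
      calc |V - lam * R ^ (n+1)| / R ^ (n+1) ≤ (32 * R ^ n) / R ^ (n+1) := by
            gcongr
        _ = 32 / R := by
            rw [pow_succ]
            field_simp
    have h0 : Tendsto (fun R : ℝ => 32 / R) atTop (nhds 0) :=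
      tendsto_const_nhds.div_atTop tendsto_id
    have h1 : Tendsto (fun R : ℝ =>
        (volume ({x : Fin (n+1) → ℝ | ∃ m : ℤ, |(∑ i, |x i| ^ p) - (m : ℝ)| < lam / 2} ∩
            {x | ∀ i, x i ∈ Set.Icc (-R / 2) (R / 2)})).toReal / R ^ (n+1) - lam)
        atTop (nhds 0) := by
      apply squeeze_zero_norm' ?_ h0
      filter_upwards [eventually_ge_atTop (1:ℝ)] with R hR
      rw [Real.norm_eq_abs]
      exact hquot R hR
    have h2 := h1.add (tendsto_const_nhds : Tendsto (fun _ : ℝ => lam) atTop (nhds lam))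
    simpa using h2
end
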